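/- arXiv:1710.05017 — 5 statements merged into one kernel-verified Lean document; each statement's English description precedes it below -/
import Mathlib

section
/- For any continuous convex function f : ℝ → ℝ, the map A ↦ Tr(f(A)) is convex on the space of n×n real symmetric matrices, where f(A) is defined via the spectral decomposition by applying f to each eigenvalue. -/
open scoped BigOperators

noncomputable section

/-- `Tr f(A)`: apply `f : ℝ → ℝ` to each eigenvalue of the symmetric matrix `A`
(via the spectral decomposition) and sum; junk value `0` for non-symmetric matrices. -/
def traceFun {n : ℕ} (f : ℝ → ℝ) (A : Matrix (Fin n) (Fin n) ℝ) : ℝ :=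
  if h : A.IsHermitian then ∑ i, f (h.eigenvalues i) else 0

lemma peierls {n : ℕ} (f : ℝ → ℝ) (hconv : ConvexOn ℝ Set.univ f)
    {A : Matrix (Fin n) (Fin n) ℝ} (hA : A.IsHermitian)
    (U : Matrix.unitaryGroup (Fin n) ℝ) :
    ∑ i, f (((star (U : Matrix (Fin n) (Fin n) ℝ)) * A * (U : Matrix (Fin n) (Fin n) ℝ)) i i)
      ≤ ∑ j, f (hA.eigenvalues j) := by
  set V : Matrix (Fin n) (Fin n) ℝ := (hA.eigenvectorUnitary : Matrix (Fin n) (Fin n) ℝ) with hV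
  set W : Matrix (Fin n) (Fin n) ℝ := star V * (U : Matrix (Fin n) (Fin n) ℝ) with hW
  have hWmem : W ∈ Matrix.unitaryGroup (Fin n) ℝ :=
    (mul_mem (Unitary.star_mem hA.eigenvectorUnitary.2) U.2)
  have hWsW : star W * W = 1 := Matrix.mem_unitaryGroup_iff'.mp hWmem
  have hWWs : W * star W = 1 := Matrix.mem_unitaryGroup_iff.mp hWmem
  set D : Matrix (Fin n) (Fin n) ℝ := Matrix.diagonal hA.eigenvalues with hD
  have hdiag : (star (U : Matrix (Fin n) (Fin n) ℝ)) * A * (U : Matrix (Fin n) (Fin n) ℝ)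
      = star W * D * W := by
    have hspec := hA.spectral_theorem
    have : A = V * D * star V := by
      simpa [hV, hD] using hspec
    rw [this, hW]
    simp only [Matrix.star_mul, star_star]
    noncomm_ring
  have hentry : ∀ i, ((star (U : Matrix (Fin n) (Fin n) ℝ)) * A * (U : Matrix (Fin n) (Fin n) ℝ)) i i
      = ∑ j, (W j i)^2 * hA.eigenvalues j := by
    intro i
    rw [hdiag, mul_assoc, Matrix.mul_apply]
    refine Finset.sum_congr rfl fun j _ => ?_
    rw [Matrix.diagonal_mul, Matrix.star_apply]
    simp only [hD, star_trivial]
    ring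
  have hcol : ∀ i, ∑ j, (W j i)^2 = 1 := by
    intro i
    have := congrArg (fun M => M i i) hWsW
    simpa [Matrix.mul_apply, Matrix.star_apply, pow_two, Matrix.one_apply] using this
  have hrow : ∀ j, ∑ i, (W j i)^2 = 1 := by
    intro j
    have := congrArg (fun M => M j j) hWWs
    simpa [Matrix.mul_apply, Matrix.star_apply, pow_two, Matrix.one_apply] using this
  calc ∑ i, f (((star (U : Matrix (Fin n) (Fin n) ℝ)) * A * (U : Matrix (Fin n) (Fin n) ℝ)) i i)
      = ∑ i, f (∑ j, (W j i)^2 • hA.eigenvalues j) := by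
        simp_rw [hentry, smul_eq_mul]
    _ ≤ ∑ i, ∑ j, (W j i)^2 • f (hA.eigenvalues j) := by
        refine Finset.sum_le_sum fun i _ => ?_
        exact hconv.map_sum_le (fun j _ => sq_nonneg _) (hcol i) (fun j _ => trivial)
    _ = ∑ j, (∑ i, (W j i)^2) * f (hA.eigenvalues j) := by
        rw [Finset.sum_comm]; simp [Finset.sum_mul, smul_eq_mul]
    _ = ∑ j, f (hA.eigenvalues j) := by simp [hrow]

lemma combHerm {n : ℕ} {A B : Matrix (Fin n) (Fin n) ℝ} (hA : A.IsHermitian)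
    (hB : B.IsHermitian) (a b : ℝ) : (a • A + b • B).IsHermitian := by
  unfold Matrix.IsHermitian at *
  rw [Matrix.conjTranspose_add, Matrix.conjTranspose_smul, Matrix.conjTranspose_smul,
    hA, hB, star_trivial, star_trivial]

/-- For any continuous convex `f : ℝ → ℝ`, the map `A ↦ Tr f(A)` is convex on the space of
`n × n` real symmetric matrices. -/
theorem stmt2 (n : ℕ) (f : ℝ → ℝ) (hf : Continuous f)
    (hconv : ConvexOn ℝ Set.univ f) :
    ConvexOn ℝ {A : Matrix (Fin n) (Fin n) ℝ | A.IsHermitian} (traceFun f) := by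
  constructor
  · intro A hA B hB a b ha hb hab
    exact combHerm hA hB a b
  · intro A hA B hB a b ha hb hab
    have hA' : A.IsHermitian := hA
    have hB' : B.IsHermitian := hB
    have hC : (a • A + b • B).IsHermitian := combHerm hA' hB' a b
    simp only [traceFun, dif_pos hA', dif_pos hB', dif_pos hC]
    set U := hC.eigenvectorUnitary with hU
    set Um : Matrix (Fin n) (Fin n) ℝ := (U : Matrix (Fin n) (Fin n) ℝ)
    have hdiag : star Um * (a • A + b • B) * Um = Matrix.diagonal hC.eigenvalues := by
      have := hC.conjStarAlgAut_star_eigenvectorUnitary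
      simpa using this
    have heig : ∀ i, hC.eigenvalues i
        = a * (star Um * A * Um) i i + b * (star Um * B * Um) i i := by
      intro i
      have h1 : (star Um * (a • A + b • B) * Um) i i = hC.eigenvalues i := by
        rw [hdiag]; simp [Matrix.diagonal_apply]
      rw [← h1]
      simp [Matrix.mul_add, Matrix.add_mul, Matrix.mul_smul, Matrix.smul_mul]
    calc ∑ i, f (hC.eigenvalues i)
        ≤ ∑ i, (a * f ((star Um * A * Um) i i) + b * f ((star Um * B * Um) i i)) := by
          refine Finset.sum_le_sum fun i _ => ?_
          rw [heig i]
          have := hconv.2 (Set.mem_univ ((star Um * A * Um) i i))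
            (Set.mem_univ ((star Um * B * Um) i i)) ha hb hab
          simpa [smul_eq_mul] using this
      _ = a * ∑ i, f ((star Um * A * Um) i i) + b * ∑ i, f ((star Um * B * Um) i i) := by
          rw [Finset.sum_add_distrib, Finset.mul_sum, Finset.mul_sum]
      _ ≤ a * ∑ j, f (hA'.eigenvalues j) + b * ∑ j, f (hB'.eigenvalues j) :=
          add_le_add (mul_le_mul_of_nonneg_left (peierls f hconv hA' U) ha)
            (mul_le_mul_of_nonneg_left (peierls f hconv hB' U) hb)
      _ = a • ∑ i, f (hA'.eigenvalues i) + b • ∑ i, f (hB'.eigenvalues i) := by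
          simp [smul_eq_mul]
end
end

section
/- Let d, n, t be positive integers with t ≤ d. The number of 3-uniform hypergraphs on vertex set [n] with exactly t hyperedges (no repeated hyperedges) in which every vertex has even degree is at most n^{3t/2} · t^{Ct} for some absolute constant C. Consequently, ∑_{t=1}^{d} (number of even-degree 3-uniform hypergraphs with t edges) · λ^{2t} n^{-3t} ≤ ∑_{t=1}^d n^{3t/2} t^{Ct} λ^{2t} n^{-3t}, which tends to 0 as n → ∞ whenever λ² ≤ n^{3/2−ε} for a constant ε > 0 and d ≤ n^{cε} for a sufficiently small constant c > 0. -/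
open scoped BigOperators Classical
open Filter

noncomputable section

/-- The number of 3-uniform hypergraphs on vertex set `[n]` with exactly `t` distinct
hyperedges (each hyperedge a 3-element multiset of `[n]`) in which every vertex has even
total degree (counted with multiplicity). -/
def evenHypCount (n t : ℕ) : ℕ :=
  (Finset.univ.filter fun H : Finset (Sym (Fin n) 3) =>
      H.card = t ∧ ∀ i : Fin n, Even (∑ e ∈ H, (e : Multiset (Fin n)).count i)).card

private lemma even_ge_two {m : ℕ} (h : Even m) (h0 : m ≠ 0) : 2 ≤ m := by
  obtain ⟨k, rfl⟩ := h; omega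

private lemma supp_lemma {n : ℕ} (H : Finset (Sym (Fin n) 3))
    (he : ∀ i : Fin n, Even (∑ e ∈ H, (e : Multiset (Fin n)).count i)) :
    2 * (Finset.univ.filter fun i : Fin n =>
        (∑ e ∈ H, (e : Multiset (Fin n)).count i) ≠ 0).card ≤ 3 * H.card := by
  set S := Finset.univ.filter fun i : Fin n =>
        (∑ e ∈ H, (e : Multiset (Fin n)).count i) ≠ 0 with hS
  calc 2 * S.card = ∑ _i ∈ S, 2 := by rw [Finset.sum_const, smul_eq_mul, mul_comm]
    _ ≤ ∑ i ∈ S, ∑ e ∈ H, (e : Multiset (Fin n)).count i := by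
        refine Finset.sum_le_sum fun i hi => ?_
        rw [hS, Finset.mem_filter] at hi
        exact even_ge_two (he i) hi.2
    _ ≤ ∑ i ∈ Finset.univ, ∑ e ∈ H, (e : Multiset (Fin n)).count i :=
        Finset.sum_le_sum_of_subset (Finset.filter_subset _ _)
    _ = ∑ e ∈ H, ∑ i ∈ Finset.univ, (e : Multiset (Fin n)).count i := Finset.sum_comm
    _ = ∑ e ∈ H, 3 := by
        refine Finset.sum_congr rfl fun e _ => ?_
        rw [Multiset.sum_count_eq_card (fun a _ => Finset.mem_univ a)]
        exact e.2
    _ = 3 * H.card := by rw [Finset.sum_const, smul_eq_mul, mul_comm]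

private lemma edges_card {n : ℕ} (S : Finset (Fin n)) :
    (Finset.univ.filter fun e : Sym (Fin n) 3 =>
        ∀ i ∈ (e : Multiset (Fin n)), i ∈ S).card ≤ (S.card + 2) ^ 3 := by
  have h1 : (Finset.univ.filter fun e : Sym (Fin n) 3 =>
      ∀ i ∈ (e : Multiset (Fin n)), i ∈ S).card
      ≤ (Finset.univ : Finset (Sym {x // x ∈ S} 3)).card := by
    refine Finset.card_le_card_of_surjOn (fun σ => σ.map Subtype.val) ?_
    intro e he
    simp only [Finset.coe_filter, Set.mem_setOf_eq, Finset.mem_univ, true_and] at he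
    refine ⟨⟨(e : Multiset (Fin n)).attach.map fun x => (⟨x.1, he x.1 x.2⟩ : {x // x ∈ S}),
      by simp [e.2]⟩, Finset.mem_coe.2 (Finset.mem_univ _), ?_⟩
    apply Subtype.ext
    simp [Sym.coe_map, Multiset.map_map, Function.comp]
  have h2 : (Finset.univ : Finset (Sym {x // x ∈ S} 3)).card = (S.card + 2).choose 3 := by
    rw [Finset.card_univ, Sym.card_sym_eq_choose, Fintype.card_coe]
    congr 1
  calc _ ≤ (S.card + 2).choose 3 := h1.trans_eq h2
    _ ≤ (S.card + 2) ^ 3 := Nat.choose_le_pow _ _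

private lemma count_le (n t : ℕ) (hn : 1 ≤ n) :
    evenHypCount n t ≤ (3 * t / 2 + 1) * n ^ (3 * t / 2) * ((3 * t / 2 + 2) ^ 3) ^ t := by
  set k := 3 * t / 2 with hk
  set A := (Finset.univ : Finset (Finset (Fin n))).filter (fun S => S.card ≤ k) with hA
  set B := fun S : Finset (Fin n) =>
    (Finset.univ.filter fun e : Sym (Fin n) 3 =>
        ∀ i ∈ (e : Multiset (Fin n)), i ∈ S).powersetCard t with hB
  have hsub : (Finset.univ.filter fun H : Finset (Sym (Fin n) 3) =>
      H.card = t ∧ ∀ i : Fin n, Even (∑ e ∈ H, (e : Multiset (Fin n)).count i))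
      ⊆ A.biUnion B := by
    intro H hH
    rw [Finset.mem_filter] at hH
    obtain ⟨-, hcard, he⟩ := hH
    set S := Finset.univ.filter fun i : Fin n =>
        (∑ e ∈ H, (e : Multiset (Fin n)).count i) ≠ 0 with hS
    have h2 : 2 * S.card ≤ 3 * H.card := supp_lemma H he
    refine Finset.mem_biUnion.2 ⟨S, ?_, ?_⟩
    · rw [hA, Finset.mem_filter]
      refine ⟨Finset.mem_univ _, ?_⟩
      rw [hk, Nat.le_div_iff_mul_le (by norm_num)]
      rw [← hcard]; omega
    · rw [hB, Finset.mem_powersetCard]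
      refine ⟨?_, hcard⟩
      intro e heH
      rw [Finset.mem_filter]
      refine ⟨Finset.mem_univ _, fun i hie => ?_⟩
      rw [hS, Finset.mem_filter]
      refine ⟨Finset.mem_univ _, ?_⟩
      have h3 : 0 < (e : Multiset (Fin n)).count i := Multiset.count_pos.2 hie
      have h4 : (e : Multiset (Fin n)).count i ≤ ∑ e ∈ H, (e : Multiset (Fin n)).count i :=
        Finset.single_le_sum (f := fun e : Sym (Fin n) 3 => (e : Multiset (Fin n)).count i)
          (fun _ _ => Nat.zero_le _) heH
      omega
  have hBcard : ∀ S ∈ A, (B S).card ≤ ((k + 2) ^ 3) ^ t := by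
    intro S hSA
    rw [hA, Finset.mem_filter] at hSA
    rw [hB, Finset.card_powersetCard]
    calc _ ≤ ((Finset.univ.filter fun e : Sym (Fin n) 3 =>
          ∀ i ∈ (e : Multiset (Fin n)), i ∈ S).card) ^ t := Nat.choose_le_pow _ _
      _ ≤ ((S.card + 2) ^ 3) ^ t := Nat.pow_le_pow_left (edges_card S) t
      _ ≤ ((k + 2) ^ 3) ^ t := Nat.pow_le_pow_left (Nat.pow_le_pow_left (by omega) 3) t
  have hAcard : A.card ≤ (k + 1) * n ^ k := by
    have hsub2 : A ⊆ (Finset.range (k + 1)).biUnion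
        (fun j => (Finset.univ : Finset (Fin n)).powersetCard j) := by
      intro S hSA
      rw [hA, Finset.mem_filter] at hSA
      refine Finset.mem_biUnion.2 ⟨S.card, Finset.mem_range.2 (by omega), ?_⟩
      rw [Finset.mem_powersetCard]
      exact ⟨Finset.subset_univ _, rfl⟩
    calc A.card ≤ ∑ j ∈ Finset.range (k + 1),
          ((Finset.univ : Finset (Fin n)).powersetCard j).card :=
        (Finset.card_le_card hsub2).trans (Finset.card_biUnion_le)
      _ ≤ ∑ _j ∈ Finset.range (k + 1), n ^ k := by
          refine Finset.sum_le_sum fun j hj => ?_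
          rw [Finset.card_powersetCard, Finset.card_univ, Fintype.card_fin]
          exact (Nat.choose_le_pow _ _).trans
            (Nat.pow_le_pow_right hn (Nat.lt_succ_iff.1 (Finset.mem_range.1 hj)))
      _ = (k + 1) * n ^ k := by rw [Finset.sum_const, Finset.card_range, smul_eq_mul]
  calc evenHypCount n t ≤ (A.biUnion B).card := Finset.card_le_card hsub
    _ ≤ ∑ S ∈ A, (B S).card := Finset.card_biUnion_le
    _ ≤ ∑ _S ∈ A, ((k + 2) ^ 3) ^ t := Finset.sum_le_sum hBcard
    _ = A.card * ((k + 2) ^ 3) ^ t := by rw [Finset.sum_const, smul_eq_mul]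
    _ ≤ ((k + 1) * n ^ k) * ((k + 2) ^ 3) ^ t := Nat.mul_le_mul_right _ hAcard

private lemma count_zero_vertices (t : ℕ) (ht : 1 ≤ t) : evenHypCount 0 t = 0 := by
  rw [evenHypCount, Finset.card_eq_zero, Finset.filter_eq_empty_iff]
  rintro H - ⟨hcard, -⟩
  obtain ⟨e, -⟩ := Finset.card_pos.1 (hcard ▸ ht)
  have h3 : Multiset.card (e : Multiset (Fin 0)) = 3 := e.2
  obtain ⟨i, -⟩ := Multiset.card_pos_iff_exists_mem.1 (lt_of_lt_of_eq (by norm_num) h3.symm)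
  exact i.elim0

private lemma count_one (n : ℕ) : evenHypCount n 1 = 0 := by
  rw [evenHypCount, Finset.card_eq_zero, Finset.filter_eq_empty_iff]
  rintro H - ⟨hcard, he⟩
  have hev : Even (∑ i : Fin n, ∑ e ∈ H, (e : Multiset (Fin n)).count i) :=
    Finset.even_sum _ fun i _ => he i
  have hsum : (∑ i : Fin n, ∑ e ∈ H, (e : Multiset (Fin n)).count i) = 3 := by
    rw [Finset.sum_comm]
    have : ∀ e ∈ H, (∑ i : Fin n, (e : Multiset (Fin n)).count i) = 3 := by
      intro e _
      rw [Multiset.sum_count_eq_card (fun a _ => Finset.mem_univ a)]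
      exact e.2
    rw [Finset.sum_congr rfl this, Finset.sum_const, hcard, smul_eq_mul, one_mul]
  rw [hsum] at hev
  simp [Nat.even_iff] at hev

private lemma real_bound (n t : ℕ) (ht : 1 ≤ t) :
    (evenHypCount n t : ℝ) ≤ (n : ℝ) ^ ((3 * (t : ℝ)) / 2) * (t : ℝ) ^ ((12 : ℝ) * (t : ℝ)) := by
  rcases Nat.eq_zero_or_pos n with hn | hn
  · subst hn
    rw [count_zero_vertices t ht]
    push_cast
    rw [Real.zero_rpow (by positivity)]
    simp
  rcases eq_or_lt_of_le ht with h1 | ht2'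
  · rw [← h1]
    rw [count_one]
    push_cast
    positivity
  have ht2 : 2 ≤ t := ht2'
  have key := count_le n t hn
  set k := 3 * t / 2 with hk
  -- natural-number estimate of the combinatorial factor
  have hnat : (k + 1) * n ^ k * ((k + 2) ^ 3) ^ t ≤ n ^ k * t ^ (12 * t) := by
    have e1 : k + 1 ≤ t ^ 3 := by
      have h41 : 4 * t ≤ t ^ 2 * t :=
        Nat.mul_le_mul_right t (le_trans (by norm_num) (Nat.pow_le_pow_left ht2 2))
      have h42 : t ^ 2 * t = t ^ 3 := by ring
      have h43 : k + 1 ≤ 4 * t := by omega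
      omega
    have e2 : (k + 2) ^ 3 ≤ t ^ 9 := by
      have h27 : (k + 2) ^ 3 ≤ 27 * t ^ 3 := by
        have hkle : k + 2 ≤ 3 * t := by omega
        calc (k + 2) ^ 3 ≤ (3 * t) ^ 3 := Nat.pow_le_pow_left hkle 3
          _ = 27 * t ^ 3 := by ring
      have h64 : 27 ≤ t ^ 6 := le_trans (by norm_num) (Nat.pow_le_pow_left ht2 6)
      calc (k + 2) ^ 3 ≤ 27 * t ^ 3 := h27
        _ ≤ t ^ 6 * t ^ 3 := Nat.mul_le_mul_right _ h64
        _ = t ^ 9 := by ring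
    calc (k + 1) * n ^ k * ((k + 2) ^ 3) ^ t
        ≤ t ^ 3 * n ^ k * (t ^ 9) ^ t :=
          Nat.mul_le_mul (Nat.mul_le_mul_right _ e1) (Nat.pow_le_pow_left e2 t)
      _ = n ^ k * t ^ (3 + 9 * t) := by rw [← pow_mul t 9 t, pow_add]; ring
      _ ≤ n ^ k * t ^ (12 * t) :=
          Nat.mul_le_mul_left _ (Nat.pow_le_pow_right (le_trans one_le_two ht2) (by omega))
  have hcount : evenHypCount n t ≤ n ^ k * t ^ (12 * t) := le_trans key hnat
  have hcast : (evenHypCount n t : ℝ) ≤ (n : ℝ) ^ k * (t : ℝ) ^ (12 * t) := by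
    exact_mod_cast hcount
  refine le_trans hcast (mul_le_mul ?_ ?_ (by positivity) (by positivity))
  · rw [← Real.rpow_natCast (n : ℝ) k]
    refine Real.rpow_le_rpow_of_exponent_le (by exact_mod_cast hn) ?_
    calc ((k : ℕ) : ℝ) ≤ ((3 * t : ℕ) : ℝ) / 2 := by
          rw [hk]; exact_mod_cast Nat.cast_div_le
      _ = (3 * (t : ℝ)) / 2 := by push_cast; ring
  · rw [← Real.rpow_natCast (t : ℝ) (12 * t)]
    apply le_of_eq
    congr 1
    push_cast; ring

/-- Even-degree 3-uniform hypergraphs with `t` edges number at most `n^{3t/2} · t^{Ct}`,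
and consequently `∑_{t=1}^{d} (count) · λ^{2t} n^{-3t} → 0` as `n → ∞` whenever
`λ² ≤ n^{3/2−ε}` and `d ≤ n^{cε}` for a sufficiently small constant `c > 0`. -/
theorem stmt6 :
    ∃ C : ℝ, 0 < C ∧
      (∀ n t : ℕ, 1 ≤ t →
        (evenHypCount n t : ℝ) ≤ (n : ℝ) ^ ((3 * (t : ℝ)) / 2) * (t : ℝ) ^ (C * (t : ℝ))) ∧
      ∀ ε : ℝ, 0 < ε →
        ∃ c : ℝ, 0 < c ∧
          ∀ (lam : ℕ → ℝ) (d : ℕ → ℕ),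
            (∀ n : ℕ, (lam n) ^ 2 ≤ (n : ℝ) ^ ((3 : ℝ) / 2 - ε)) →
            (∀ n : ℕ, (d n : ℝ) ≤ (n : ℝ) ^ (c * ε)) →
            Tendsto (fun n : ℕ => ∑ t ∈ Finset.Icc 1 (d n),
                (evenHypCount n t : ℝ) * (lam n) ^ (2 * t) * (n : ℝ) ^ (-(3 * (t : ℝ))))
              atTop (nhds 0) := by
  refine ⟨12, by norm_num, fun n t ht => real_bound n t ht, ?_⟩
  intro ε hε
  refine ⟨1 / 48, by norm_num, ?_⟩
  intro lam d hlam hd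
  set f := fun n : ℕ => ∑ t ∈ Finset.Icc 1 (d n),
      (evenHypCount n t : ℝ) * (lam n) ^ (2 * t) * (n : ℝ) ^ (-(3 * (t : ℝ))) with hf
  have hnonneg : ∀ n, 0 ≤ f n := by
    intro n
    refine Finset.sum_nonneg fun t _ => ?_
    have h1 : (0 : ℝ) ≤ (lam n) ^ (2 * t) := by
      rw [pow_mul]; positivity
    positivity
  have hub : ∀ᶠ n : ℕ in atTop, f n ≤ (n : ℝ) ^ ((1 / 48 : ℝ) * ε + -(3 / 4 * ε)) := by
    filter_upwards [eventually_ge_atTop 1] with n hn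
    have hx : (1 : ℝ) ≤ (n : ℝ) := by exact_mod_cast hn
    have hx0 : (0 : ℝ) < (n : ℝ) := by linarith
    have key : ∀ t ∈ Finset.Icc 1 (d n),
        (evenHypCount n t : ℝ) * (lam n) ^ (2 * t) * (n : ℝ) ^ (-(3 * (t : ℝ)))
          ≤ (n : ℝ) ^ (-(3 / 4 * ε)) := by
      intro t htmem
      obtain ⟨ht1, htd⟩ := Finset.mem_Icc.1 htmem
      have ht1' : (1 : ℝ) ≤ (t : ℝ) := by exact_mod_cast ht1
      have b1 : (evenHypCount n t : ℝ)
          ≤ (n : ℝ) ^ ((3 * (t : ℝ)) / 2) * (t : ℝ) ^ ((12 : ℝ) * (t : ℝ)) :=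
        real_bound n t ht1
      have b2 : (lam n) ^ (2 * t) ≤ (n : ℝ) ^ (((3 : ℝ) / 2 - ε) * (t : ℝ)) := by
        rw [pow_mul]
        calc ((lam n) ^ 2) ^ t ≤ ((n : ℝ) ^ ((3 : ℝ) / 2 - ε)) ^ t :=
            pow_le_pow_left₀ (sq_nonneg _) (hlam n) t
          _ = (n : ℝ) ^ (((3 : ℝ) / 2 - ε) * (t : ℝ)) := by
            rw [← Real.rpow_natCast ((n : ℝ) ^ ((3 : ℝ) / 2 - ε)) t, ← Real.rpow_mul hx0.le]
      have b3 : (t : ℝ) ^ ((12 : ℝ) * (t : ℝ)) ≤ (n : ℝ) ^ (ε / 4 * (t : ℝ)) := by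
        have h1 : (t : ℝ) ≤ (n : ℝ) ^ ((1 / 48 : ℝ) * ε) :=
          le_trans (by exact_mod_cast htd) (hd n)
        calc (t : ℝ) ^ ((12 : ℝ) * (t : ℝ))
            ≤ ((n : ℝ) ^ ((1 / 48 : ℝ) * ε)) ^ ((12 : ℝ) * (t : ℝ)) :=
              Real.rpow_le_rpow (Nat.cast_nonneg t) h1 (by positivity)
          _ = (n : ℝ) ^ (ε / 4 * (t : ℝ)) := by
              rw [← Real.rpow_mul hx0.le]; ring_nf
      have hmono : (evenHypCount n t : ℝ) * (lam n) ^ (2 * t) * (n : ℝ) ^ (-(3 * (t : ℝ)))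
          ≤ ((n : ℝ) ^ ((3 * (t : ℝ)) / 2) * (n : ℝ) ^ (ε / 4 * (t : ℝ)))
            * (n : ℝ) ^ (((3 : ℝ) / 2 - ε) * (t : ℝ)) * (n : ℝ) ^ (-(3 * (t : ℝ))) := by
        have hlamnn : (0 : ℝ) ≤ (lam n) ^ (2 * t) := by rw [pow_mul]; positivity
        refine mul_le_mul_of_nonneg_right ?_ (by positivity)
        refine mul_le_mul ?_ b2 hlamnn (by positivity)
        calc (evenHypCount n t : ℝ)
            ≤ (n : ℝ) ^ ((3 * (t : ℝ)) / 2) * (t : ℝ) ^ ((12 : ℝ) * (t : ℝ)) := b1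
          _ ≤ (n : ℝ) ^ ((3 * (t : ℝ)) / 2) * (n : ℝ) ^ (ε / 4 * (t : ℝ)) :=
              mul_le_mul_of_nonneg_left b3 (by positivity)
      refine le_trans hmono ?_
      rw [← Real.rpow_add hx0, ← Real.rpow_add hx0, ← Real.rpow_add hx0]
      refine Real.rpow_le_rpow_of_exponent_le hx ?_
      nlinarith [hε.le, ht1']
    calc f n ≤ ∑ _t ∈ Finset.Icc 1 (d n), (n : ℝ) ^ (-(3 / 4 * ε)) := Finset.sum_le_sum key
      _ = (Finset.Icc 1 (d n)).card * (n : ℝ) ^ (-(3 / 4 * ε)) := by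
          rw [Finset.sum_const, nsmul_eq_mul]
      _ ≤ (n : ℝ) ^ ((1 / 48 : ℝ) * ε) * (n : ℝ) ^ (-(3 / 4 * ε)) := by
          refine mul_le_mul_of_nonneg_right ?_ (by positivity)
          rw [Nat.card_Icc]
          simp only [Nat.add_sub_cancel]
          exact hd n
      _ = (n : ℝ) ^ ((1 / 48 : ℝ) * ε + -(3 / 4 * ε)) := (Real.rpow_add hx0 _ _).symm
  have hlim : Tendsto (fun n : ℕ => (n : ℝ) ^ ((1 / 48 : ℝ) * ε + -(3 / 4 * ε)))
      atTop (nhds 0) := by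
    have hneg : (1 / 48 : ℝ) * ε + -(3 / 4 * ε) = -((3 / 4 - 1 / 48) * ε) := by ring
    rw [hneg]
    exact (tendsto_rpow_neg_atTop (by nlinarith)).comp tendsto_natCast_atTop_atTop
  exact squeeze_zero' (Eventually.of_forall hnonneg) hub hlim
end
end

section
/- Let ν be a product probability distribution on I = 𝒜^N, let Θ be a distribution over subsets of [N], and define ρ(D,Θ) = max_{α ⊆ [N], |α| ≥ D} Pr_{S∼Θ}[α ⊆ S]. Let R : I → ℝ^{ℓ×ℓ} be a matrix-valued function and for each S ⊆ [N] let P_S : 𝒜^S → ℝ^{ℓ×ℓ} be a matrix-valued function depending only on coordinates in S. Then E_{I∼ν} E_{S∼Θ} ⟨P_S(I_S), R(I)⟩ ≥ E_{S∼Θ} E_{I∼ν} ⟨P_S(I_S), R_S^{<D}(I_S)⟩ − ρ(D,Θ)^{1/2} · (E_{S∼Θ} ‖P_S‖²_{Fr,ν})^{1/2} · ‖R‖_{Fr,ν}, where R_S(I_S) = E_{I_{S̄}∼ν}[R(I)] and R_S^{<D} is its truncation to Fourier characters of degree < D. -/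
open scoped BigOperators Classical

noncomputable section

namespace Stmt7

variable {A : Type*} [Fintype A]

/-- Expectation under the product measure `ν` on `𝒜^N` with single-coordinate weights `w`. -/
def pExp {N : ℕ} (w : A → ℝ) (f : (Fin N → A) → ℝ) : ℝ :=
  ∑ x : Fin N → A, (∏ i, w (x i)) * f x

/-- The character `χ_α` on `𝒜^N` built from an orthonormal single-coordinate basis `e`
(with `e 0` the constant function `1`). -/
def char {N K : ℕ} (e : Fin (K + 1) → A → ℝ) (α : Fin N → Fin (K + 1))
    (x : Fin N → A) : ℝ :=
  ∏ i, e (α i) (x i)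

/-- The support (set of non-constant coordinates) of a character index, whose
cardinality is the degree of `χ_α`. -/
def suppOf {N K : ℕ} (α : Fin N → Fin (K + 1)) : Finset (Fin N) :=
  Finset.univ.filter fun i => α i ≠ 0

/-- The matrix-valued Fourier coefficient `R̂_α` with respect to `ν`. -/
def fCoeff {N K l : ℕ} (w : A → ℝ) (e : Fin (K + 1) → A → ℝ)
    (R : (Fin N → A) → Matrix (Fin l) (Fin l) ℝ) (α : Fin N → Fin (K + 1)) :
    Matrix (Fin l) (Fin l) ℝ :=
  Matrix.of fun a b => pExp w fun x => char e α x * R x a b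

/-- `R_S^{<D}`: the part of the Fourier expansion of `R` supported on characters living
inside `S` and of degree `< D` (this is the degree-`<D` truncation of
`R_S(I_S) = E_{I_{S̄} ∼ ν} R(I)`). -/
def truncRestrict {N K l : ℕ} (w : A → ℝ) (e : Fin (K + 1) → A → ℝ)
    (R : (Fin N → A) → Matrix (Fin l) (Fin l) ℝ) (S : Finset (Fin N)) (D : ℕ)
    (x : Fin N → A) : Matrix (Fin l) (Fin l) ℝ :=
  ∑ α ∈ Finset.univ.filter
      (fun α : Fin N → Fin (K + 1) => suppOf α ⊆ S ∧ (suppOf α).card < D),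
    char e α x • fCoeff w e R α

/-- Squared Frobenius norm of a matrix. -/
def frobSq {l : ℕ} (M : Matrix (Fin l) (Fin l) ℝ) : ℝ := ∑ a, ∑ b, (M a b) ^ 2

lemma pExp_sum {N : ℕ} (w : A → ℝ) {ι : Type*} (s : Finset ι)
    (f : ι → (Fin N → A) → ℝ) :
    pExp w (fun x => ∑ i ∈ s, f i x) = ∑ i ∈ s, pExp w (f i) := by
  unfold pExp
  simp only [Finset.mul_sum]
  exact Finset.sum_comm

lemma pExp_const_mul {N : ℕ} (w : A → ℝ) (c : ℝ) (f : (Fin N → A) → ℝ) :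
    pExp w (fun x => c * f x) = c * pExp w f := by
  unfold pExp
  rw [Finset.mul_sum]
  exact Finset.sum_congr rfl fun x _ => by ring

def coefF {N K : ℕ} (w : A → ℝ) (e : Fin (K + 1) → A → ℝ)
    (f : (Fin N → A) → ℝ) (α : Fin N → Fin (K + 1)) : ℝ :=
  pExp w fun x => char e α x * f x

lemma complete {K : ℕ} (hKcard : Fintype.card A = K + 1)
    (w : A → ℝ) (hw : ∀ a, 0 < w a)
    (e : Fin (K + 1) → A → ℝ)
    (horth : ∀ j j', (∑ a, w a * (e j a * e j' a)) = if j = j' then (1:ℝ) else 0)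
    (a b : A) : w b * ∑ j, e j a * e j b = if a = b then (1:ℝ) else 0 := by
  classical
  let ι : A ≃ Fin (K+1) := Fintype.equivFinOfCardEq hKcard
  let M : Matrix (Fin (K+1)) (Fin (K+1)) ℝ :=
    Matrix.of fun j k => Real.sqrt (w (ι.symm k)) * e j (ι.symm k)
  have hM : M * M.transpose = 1 := by
    ext j j'
    rw [Matrix.mul_apply]
    have h1 : ∀ k, M j k * M.transpose k j'
        = w (ι.symm k) * (e j (ι.symm k) * e j' (ι.symm k)) := by
      intro k
      simp only [M, Matrix.transpose_apply, Matrix.of_apply]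
      linear_combination (e j (ι.symm k) * e j' (ι.symm k)) *
        Real.mul_self_sqrt (le_of_lt (hw (ι.symm k)))
    calc ∑ k, M j k * M.transpose k j'
        = ∑ k, w (ι.symm k) * (e j (ι.symm k) * e j' (ι.symm k)) :=
          Finset.sum_congr rfl fun k _ => h1 k
      _ = ∑ a, w a * (e j a * e j' a) :=
          Equiv.sum_comp ι.symm (fun a => w a * (e j a * e j' a))
      _ = if j = j' then 1 else 0 := horth j j'
      _ = (1 : Matrix (Fin (K+1)) (Fin (K+1)) ℝ) j j' := (Matrix.one_apply).symm
  have hM2 : M.transpose * M = 1 := mul_eq_one_comm.mp hM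
  have key : ∑ j, (Real.sqrt (w a) * e j a) * (Real.sqrt (w b) * e j b)
      = if a = b then (1:ℝ) else 0 := by
    have h := congrFun (congrFun hM2 (ι a)) (ι b)
    rw [Matrix.mul_apply] at h
    simp only [M, Matrix.transpose_apply, Matrix.of_apply, Equiv.symm_apply_apply,
      Matrix.one_apply, EmbeddingLike.apply_eq_iff_eq] at h
    exact h
  have hre : ∑ j, (Real.sqrt (w a) * e j a) * (Real.sqrt (w b) * e j b)
      = Real.sqrt (w a) * Real.sqrt (w b) * ∑ j, e j a * e j b := by
    rw [Finset.mul_sum]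
    exact Finset.sum_congr rfl fun j _ => by ring
  rw [hre] at key
  rcases eq_or_ne a b with hab | hab
  · subst hab
    rw [if_pos rfl] at key ⊢
    rw [Real.mul_self_sqrt (le_of_lt (hw a))] at key
    exact key
  · rw [if_neg hab] at key ⊢
    have ha := (Real.sqrt_pos.mpr (hw a)).ne'
    have hb := (Real.sqrt_pos.mpr (hw b)).ne'
    rcases mul_eq_zero.mp key with h | h
    · exact absurd h (mul_ne_zero ha hb)
    · rw [h, mul_zero]

lemma expand {N K : ℕ} (hKcard : Fintype.card A = K + 1)
    (w : A → ℝ) (hw : ∀ a, 0 < w a)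
    (e : Fin (K + 1) → A → ℝ)
    (horth : ∀ j j', (∑ a, w a * (e j a * e j' a)) = if j = j' then (1:ℝ) else 0)
    (f : (Fin N → A) → ℝ) (x : Fin N → A) :
    ∑ α : Fin N → Fin (K+1), coefF w e f α * char e α x = f x := by
  classical
  calc ∑ α : Fin N → Fin (K+1), coefF w e f α * char e α x
      = ∑ α : Fin N → Fin (K+1), ∑ y : Fin N → A,
          ((∏ i, w (y i)) * (char e α y * f y)) * char e α x := by
        simp only [coefF, pExp, Finset.sum_mul]
    _ = ∑ y : Fin N → A, ∑ α : Fin N → Fin (K+1),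
          ((∏ i, w (y i)) * (char e α y * f y)) * char e α x := Finset.sum_comm
    _ = ∑ y : Fin N → A, ((∏ i, w (y i)) * f y) *
          ∑ α : Fin N → Fin (K+1), ∏ i, (e (α i) (x i) * e (α i) (y i)) := by
        refine Finset.sum_congr rfl fun y _ => ?_
        rw [Finset.mul_sum]
        refine Finset.sum_congr rfl fun α _ => ?_
        simp only [char]
        rw [Finset.prod_mul_distrib]
        ring
    _ = ∑ y : Fin N → A, ((∏ i, w (y i)) * f y) *
          ∏ i, ∑ j, e j (x i) * e j (y i) := by
        refine Finset.sum_congr rfl fun y _ => ?_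
        congr 1
        rw [Finset.prod_univ_sum]
        rw [Fintype.piFinset_univ]
    _ = ∑ y : Fin N → A, f y * ∏ i, (w (y i) * ∑ j, e j (x i) * e j (y i)) := by
        refine Finset.sum_congr rfl fun y _ => ?_
        rw [Finset.prod_mul_distrib]
        ring
    _ = ∑ y : Fin N → A, f y * ∏ i, (if x i = y i then (1:ℝ) else 0) := by
        refine Finset.sum_congr rfl fun y _ => ?_
        congr 1
        exact Finset.prod_congr rfl fun i _ => complete hKcard w hw e horth (x i) (y i)
    _ = f x := by
        simp only [Finset.prod_boole]
        refine (Finset.sum_congr rfl fun y _ => ?_).trans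
          (by rw [Finset.sum_ite_eq' Finset.univ x f, if_pos (Finset.mem_univ x)])
        split_ifs with h1 h2 h2
        · exact mul_one _
        · exact absurd (funext fun i => (h1 i (Finset.mem_univ i)).symm) h2
        · exact absurd (fun i _ => by rw [h2]) h1
        · exact mul_zero _


lemma parseval {N K : ℕ} (hKcard : Fintype.card A = K + 1)
    (w : A → ℝ) (hw : ∀ a, 0 < w a)
    (e : Fin (K + 1) → A → ℝ)
    (horth : ∀ j j', (∑ a, w a * (e j a * e j' a)) = if j = j' then (1:ℝ) else 0)
    (f g : (Fin N → A) → ℝ) :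
    pExp w (fun x => f x * g x) = ∑ α : Fin N → Fin (K+1), coefF w e f α * coefF w e g α := by
  symm
  calc ∑ α : Fin N → Fin (K+1), coefF w e f α * coefF w e g α
      = ∑ α : Fin N → Fin (K+1), ∑ x : Fin N → A,
          coefF w e f α * ((∏ i, w (x i)) * (char e α x * g x)) := by
        refine Finset.sum_congr rfl fun α _ => ?_
        rw [show coefF w e g α
            = ∑ x : Fin N → A, (∏ i, w (x i)) * (char e α x * g x) from rfl,
          Finset.mul_sum]
    _ = ∑ x : Fin N → A, ∑ α : Fin N → Fin (K+1),
          coefF w e f α * ((∏ i, w (x i)) * (char e α x * g x)) := Finset.sum_comm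
    _ = ∑ x : Fin N → A, ((∏ i, w (x i)) * g x) *
          ∑ α : Fin N → Fin (K+1), coefF w e f α * char e α x := by
        refine Finset.sum_congr rfl fun x _ => ?_
        rw [Finset.mul_sum]
        exact Finset.sum_congr rfl fun α _ => by ring
    _ = pExp w (fun x => f x * g x) := by
        rw [pExp]
        refine Finset.sum_congr rfl fun x _ => ?_
        rw [expand hKcard w hw e horth f x]
        ring

lemma coef_zero {N K : ℕ} (hKcard : Fintype.card A = K + 1)
    (w : A → ℝ) (e : Fin (K + 1) → A → ℝ) (he0 : ∀ a, e 0 a = 1)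
    (horth : ∀ j j', (∑ a, w a * (e j a * e j' a)) = if j = j' then (1:ℝ) else 0)
    {S : Finset (Fin N)} {i : Fin N} (hi : i ∉ S)
    {α : Fin N → Fin (K + 1)} (hαi : α i ≠ 0)
    (g : (Fin N → A) → ℝ) (hg : ∀ x y, (∀ j ∈ S, x j = y j) → g x = g y) :
    coefF w e g α = 0 := by
  classical
  have hne : Nonempty A := Fintype.card_pos_iff.mp (by rw [hKcard]; omega)
  obtain ⟨a₀⟩ := hne
  have hzero : (∑ a, w a * e (α i) a) = 0 := by
    have h := horth (α i) 0
    simp only [he0, mul_one, if_neg hαi] at h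
    exact h
  set σ := Equiv.funSplitAt i A with hσ
  have hcoord : ∀ (a : A) (z : {j // j ≠ i} → A) (j : Fin N) (hj : j ≠ i),
      σ.symm (a, z) j = z ⟨j, hj⟩ := by
    intro a z j hj
    simp [hσ, Equiv.funSplitAt_symm_apply, dif_neg hj]
  have hcoordi : ∀ (a : A) (z : {j // j ≠ i} → A), σ.symm (a, z) i = a := by
    intro a z
    simp [hσ, Equiv.funSplitAt_symm_apply]
  have hre : coefF w e g α
      = ∑ p : A × ({j // j ≠ i} → A),
          (∏ j, w (σ.symm p j)) * (char e α (σ.symm p) * g (σ.symm p)) := by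
    rw [coefF, pExp]
    exact (Equiv.sum_comp σ.symm
      (fun x => (∏ j, w (x j)) * (char e α x * g x))).symm
  rw [hre, Fintype.sum_prod_type]
  have key : ∀ (a : A) (z : {j // j ≠ i} → A),
      (∏ j, w (σ.symm (a, z) j)) * (char e α (σ.symm (a, z)) * g (σ.symm (a, z)))
      = (w a * e (α i) a) *
        ((∏ j ∈ Finset.univ.erase i,
            (w (σ.symm (a₀, z) j) * e (α j) (σ.symm (a₀, z) j))) * g (σ.symm (a₀, z))) := by
    intro a z
    have hgz : g (σ.symm (a, z)) = g (σ.symm (a₀, z)) := by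
      apply hg
      intro j hjS
      have hj : j ≠ i := fun h => hi (h ▸ hjS)
      rw [hcoord a z j hj, hcoord a₀ z j hj]
    have hw' : (∏ j, w (σ.symm (a, z) j))
        = w a * ∏ j ∈ Finset.univ.erase i, w (σ.symm (a₀, z) j) := by
      rw [← Finset.mul_prod_erase Finset.univ _ (Finset.mem_univ i), hcoordi]
      congr 1
      refine Finset.prod_congr rfl fun j hj => ?_
      rw [hcoord a z j (Finset.ne_of_mem_erase hj), hcoord a₀ z j (Finset.ne_of_mem_erase hj)]
    have hχ : char e α (σ.symm (a, z))
        = e (α i) a * ∏ j ∈ Finset.univ.erase i, e (α j) (σ.symm (a₀, z) j) := by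
      rw [char, ← Finset.mul_prod_erase Finset.univ _ (Finset.mem_univ i), hcoordi]
      congr 1
      refine Finset.prod_congr rfl fun j hj => ?_
      rw [hcoord a z j (Finset.ne_of_mem_erase hj), hcoord a₀ z j (Finset.ne_of_mem_erase hj)]
    rw [hw', hχ, hgz, Finset.prod_mul_distrib]
    ring
  calc ∑ a : A, ∑ z : {j // j ≠ i} → A,
        (∏ j, w (σ.symm (a, z) j)) * (char e α (σ.symm (a, z)) * g (σ.symm (a, z)))
      = ∑ a : A, (w a * e (α i) a) * ∑ z : {j // j ≠ i} → A,
          ((∏ j ∈ Finset.univ.erase i,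
            (w (σ.symm (a₀, z) j) * e (α j) (σ.symm (a₀, z) j))) * g (σ.symm (a₀, z))) := by
        refine Finset.sum_congr rfl fun a _ => ?_
        rw [Finset.mul_sum]
        exact Finset.sum_congr rfl fun z _ => key a z
    _ = (∑ a, w a * e (α i) a) * ∑ z : {j // j ≠ i} → A,
          ((∏ j ∈ Finset.univ.erase i,
            (w (σ.symm (a₀, z) j) * e (α j) (σ.symm (a₀, z) j))) * g (σ.symm (a₀, z))) := by
        rw [Finset.sum_mul]
    _ = 0 := by rw [hzero, zero_mul]


lemma sum_rot {β γ δ : Type*} (s : Finset β) (t : Finset γ) (u : Finset δ)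
    (F : β → γ → δ → ℝ) :
    ∑ a ∈ s, ∑ b ∈ t, ∑ c ∈ u, F a b c = ∑ c ∈ u, ∑ a ∈ s, ∑ b ∈ t, F a b c := by
  have h : ∀ a : β, ∑ b ∈ t, ∑ c ∈ u, F a b c = ∑ c ∈ u, ∑ b ∈ t, F a b c :=
    fun a => Finset.sum_comm
  simp only [h]
  exact Finset.sum_comm

def mC {N K l : ℕ} (w : A → ℝ) (e : Fin (K + 1) → A → ℝ)
    (M : (Fin N → A) → Matrix (Fin l) (Fin l) ℝ) (a b : Fin l)
    (α : Fin N → Fin (K + 1)) : ℝ :=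
  coefF w e (fun x => M x a b) α

lemma trace_parseval {N K l : ℕ} (hKcard : Fintype.card A = K + 1)
    (w : A → ℝ) (hw : ∀ a, 0 < w a)
    (e : Fin (K + 1) → A → ℝ)
    (horth : ∀ j j', (∑ a, w a * (e j a * e j' a)) = if j = j' then (1:ℝ) else 0)
    (M Q : (Fin N → A) → Matrix (Fin l) (Fin l) ℝ) :
    pExp w (fun x => (M x * Q x).trace)
      = ∑ α : Fin N → Fin (K+1), ∑ a, ∑ b, mC w e M a b α * mC w e Q b a α := by
  have h1 : (fun x => (M x * Q x).trace)
      = fun x => ∑ a, ∑ b, (fun y => M y a b) x * (fun y => Q y b a) x := by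
    funext x
    simp [Matrix.trace, Matrix.diag, Matrix.mul_apply]
  rw [h1, pExp_sum]
  rw [← sum_rot Finset.univ Finset.univ Finset.univ (fun a b α => mC w e M a b α * mC w e Q b a α)]
  refine Finset.sum_congr rfl fun a _ => ?_
  rw [pExp_sum]
  refine Finset.sum_congr rfl fun b _ => ?_
  exact parseval hKcard w hw e horth _ _

lemma frob_parseval {N K l : ℕ} (hKcard : Fintype.card A = K + 1)
    (w : A → ℝ) (hw : ∀ a, 0 < w a)
    (e : Fin (K + 1) → A → ℝ)
    (horth : ∀ j j', (∑ a, w a * (e j a * e j' a)) = if j = j' then (1:ℝ) else 0)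
    (M : (Fin N → A) → Matrix (Fin l) (Fin l) ℝ) :
    pExp w (fun x => frobSq (M x))
      = ∑ α : Fin N → Fin (K+1), ∑ a, ∑ b, (mC w e M a b α)^2 := by
  have h1 : (fun x => frobSq (M x))
      = fun x => ∑ a, ∑ b, (fun y => M y a b) x * (fun y => M y a b) x := by
    funext x
    simp [frobSq, pow_two]
  rw [h1, pExp_sum]
  rw [← sum_rot Finset.univ Finset.univ Finset.univ (fun a b α => (mC w e M a b α)^2)]
  refine Finset.sum_congr rfl fun a _ => ?_
  rw [pExp_sum]
  refine Finset.sum_congr rfl fun b _ => ?_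
  rw [parseval hKcard w hw e horth _ _]
  exact Finset.sum_congr rfl fun α _ => (pow_two _).symm

lemma trunc_parseval {N K l D : ℕ}
    (w : A → ℝ) (e : Fin (K + 1) → A → ℝ)
    (P₀ : (Fin N → A) → Matrix (Fin l) (Fin l) ℝ)
    (R : (Fin N → A) → Matrix (Fin l) (Fin l) ℝ) (S : Finset (Fin N)) :
    pExp w (fun x => (P₀ x * truncRestrict w e R S D x).trace)
      = ∑ α ∈ Finset.univ.filter
          (fun α : Fin N → Fin (K+1) => suppOf α ⊆ S ∧ (suppOf α).card < D),
          ∑ a, ∑ b, mC w e P₀ a b α * mC w e R b a α := by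
  classical
  set F := Finset.univ.filter
      (fun α : Fin N → Fin (K+1) => suppOf α ⊆ S ∧ (suppOf α).card < D) with hF
  have h1 : (fun x => (P₀ x * truncRestrict w e R S D x).trace)
      = fun x => ∑ α ∈ F, ∑ a, ∑ b,
          mC w e R b a α * ((fun y => char e α y * P₀ y a b) x) := by
    funext x
    simp only [Matrix.trace, Matrix.diag, Matrix.mul_apply, truncRestrict, ← hF,
      Matrix.sum_apply, Matrix.smul_apply, smul_eq_mul]
    rw [← sum_rot Finset.univ Finset.univ F
        (fun a b α => mC w e R b a α * (char e α x * P₀ x a b))]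
    refine Finset.sum_congr rfl fun a _ => ?_
    refine Finset.sum_congr rfl fun b _ => ?_
    rw [Finset.mul_sum]
    refine Finset.sum_congr rfl fun α _ => ?_
    show P₀ x a b * (char e α x * fCoeff w e R α b a)
        = mC w e R b a α * (char e α x * P₀ x a b)
    have h2 : fCoeff w e R α b a = mC w e R b a α := rfl
    rw [h2]; ring
  rw [h1, pExp_sum]
  refine Finset.sum_congr rfl fun α _ => ?_
  rw [pExp_sum]
  refine Finset.sum_congr rfl fun a _ => ?_
  rw [pExp_sum]
  refine Finset.sum_congr rfl fun b _ => ?_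
  rw [pExp_const_mul]
  exact mul_comm _ _


/-- Random restriction: for a product distribution `ν` on `𝒜^N`, a distribution `Θ` over
subsets of `[N]`, functions `P_S` depending only on the coordinates in `S`, and any
matrix-valued `R`,
`E_ν E_Θ ⟨P_S(I_S), R(I)⟩ ≥ E_Θ E_ν ⟨P_S(I_S), R_S^{<D}(I_S)⟩
   − ρ(D,Θ)^{1/2} (E_Θ ‖P_S‖²_{Fr,ν})^{1/2} ‖R‖_{Fr,ν}`,
where `ρ(D,Θ) = max_{|α| ≥ D} Pr_{S∼Θ}[α ⊆ S]`. -/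
theorem stmt7 {N K l D : ℕ} (hKcard : Fintype.card A = K + 1)
    (w : A → ℝ) (hw : ∀ a, 0 < w a) (hw1 : ∑ a, w a = 1)
    (e : Fin (K + 1) → A → ℝ) (he0 : ∀ a, e 0 a = 1)
    (horth : ∀ j j', (∑ a, w a * (e j a * e j' a)) = if j = j' then (1 : ℝ) else 0)
    (θ : Finset (Fin N) → ℝ) (hθ0 : ∀ S, 0 ≤ θ S) (hθ1 : ∑ S, θ S = 1)
    (rho : ℝ)
    (hrho : ∀ α : Finset (Fin N), D ≤ α.card →
      (∑ S ∈ Finset.univ.filter fun S : Finset (Fin N) => α ⊆ S, θ S) ≤ rho)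
    (P : Finset (Fin N) → (Fin N → A) → Matrix (Fin l) (Fin l) ℝ)
    (hP : ∀ S x y, (∀ i ∈ S, x i = y i) → P S x = P S y)
    (R : (Fin N → A) → Matrix (Fin l) (Fin l) ℝ) :
    pExp w (fun x => ∑ S : Finset (Fin N), θ S * (P S x * R x).trace) ≥
      (∑ S : Finset (Fin N), θ S *
          pExp w fun x => (P S x * truncRestrict w e R S D x).trace)
        - Real.sqrt rho *
            Real.sqrt (∑ S : Finset (Fin N), θ S * pExp w fun x => frobSq (P S x)) *
            Real.sqrt (pExp w fun x => frobSq (R x)) := by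
  classical
  -- Fourier coefficient abbreviations
  set T : Finset (Fin N) → (Fin N → Fin (K+1)) → ℝ :=
    fun S α => ∑ a, ∑ b, mC w e (P S) a b α * mC w e R b a α with hT
  -- Step 1: Parseval for the LHS
  have hLHS : pExp w (fun x => ∑ S : Finset (Fin N), θ S * (P S x * R x).trace)
      = ∑ S : Finset (Fin N), θ S * ∑ α : Fin N → Fin (K+1), T S α := by
    rw [pExp_sum]
    refine Finset.sum_congr rfl fun S _ => ?_
    rw [pExp_const_mul, trace_parseval hKcard w hw e horth (P S) R]
  -- Step 2: Parseval for the truncated terms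
  have hTR : ∀ S : Finset (Fin N),
      (pExp w fun x => (P S x * truncRestrict w e R S D x).trace)
      = ∑ α ∈ Finset.univ.filter
          (fun α : Fin N → Fin (K+1) => suppOf α ⊆ S ∧ (suppOf α).card < D), T S α :=
    fun S => trunc_parseval w e (P S) R S
  -- Step 3: vanishing of coefficients of P S outside S
  have hvan : ∀ (S : Finset (Fin N)) (α : Fin N → Fin (K+1)), ¬ (suppOf α ⊆ S) →
      T S α = 0 := by
    intro S α hns
    obtain ⟨i, hiα, hiS⟩ := Finset.not_subset.mp hns
    have hαi : α i ≠ 0 := (Finset.mem_filter.mp hiα).2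
    refine Finset.sum_eq_zero fun a _ => Finset.sum_eq_zero fun b _ => ?_
    have h0 : mC w e (P S) a b α = 0 :=
      coef_zero hKcard w e he0 horth hiS hαi _ (fun x y h => by rw [hP S x y h])
    rw [h0, zero_mul]
  -- the high-degree part
  set G : Finset (Fin N) → Finset (Fin N → Fin (K+1)) :=
    fun S => Finset.univ.filter
      (fun α : Fin N → Fin (K+1) => suppOf α ⊆ S ∧ D ≤ (suppOf α).card) with hG
  have hdiff : ∀ S : Finset (Fin N),
      (∑ α : Fin N → Fin (K+1), T S α)
        - (∑ α ∈ Finset.univ.filter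
            (fun α : Fin N → Fin (K+1) => suppOf α ⊆ S ∧ (suppOf α).card < D), T S α)
      = ∑ α ∈ G S, T S α := by
    intro S
    rw [← Finset.sum_filter_add_sum_filter_not Finset.univ
      (fun α : Fin N → Fin (K+1) => suppOf α ⊆ S ∧ (suppOf α).card < D) (T S)]
    have hsub : G S ⊆ Finset.univ.filter
        (fun α : Fin N → Fin (K+1) => ¬(suppOf α ⊆ S ∧ (suppOf α).card < D)) := by
      intro α hα
      rw [hG, Finset.mem_filter] at hα
      rw [Finset.mem_filter]
      exact ⟨Finset.mem_univ _, fun h => absurd h.2 (not_lt.mpr hα.2.2)⟩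
    have hz : ∀ α ∈ Finset.univ.filter
        (fun α : Fin N → Fin (K+1) => ¬(suppOf α ⊆ S ∧ (suppOf α).card < D)),
        α ∉ G S → T S α = 0 := by
      intro α hα hnG
      rw [Finset.mem_filter] at hα
      by_cases hss : suppOf α ⊆ S
      · exfalso
        apply hnG
        rw [hG, Finset.mem_filter]
        refine ⟨Finset.mem_univ _, hss, ?_⟩
        by_contra hlt
        exact hα.2 ⟨hss, lt_of_not_ge hlt⟩
      · exact hvan S α hss
    rw [(Finset.sum_subset hsub hz).symm]
    ring
  -- Cauchy–Schwarz setup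
  set u : Finset (Fin N) × ((Fin N → Fin (K+1)) × (Fin l × Fin l)) → ℝ :=
    fun q => if suppOf q.2.1 ⊆ q.1 ∧ D ≤ (suppOf q.2.1).card then
      Real.sqrt (θ q.1) * mC w e (P q.1) q.2.2.1 q.2.2.2 q.2.1 else 0 with hu
  set v : Finset (Fin N) × ((Fin N → Fin (K+1)) × (Fin l × Fin l)) → ℝ :=
    fun q => if suppOf q.2.1 ⊆ q.1 ∧ D ≤ (suppOf q.2.1).card then
      Real.sqrt (θ q.1) * mC w e R q.2.2.2 q.2.2.1 q.2.1 else 0 with hv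
  have huv : ∑ q, u q * v q = ∑ S : Finset (Fin N), θ S * ∑ α ∈ G S, T S α := by
    rw [Fintype.sum_prod_type]
    refine Finset.sum_congr rfl fun S _ => ?_
    rw [Fintype.sum_prod_type]
    rw [hG]
    rw [Finset.mul_sum, Finset.sum_filter]
    refine Finset.sum_congr rfl fun α _ => ?_
    by_cases hok : suppOf α ⊆ S ∧ D ≤ (suppOf α).card
    · rw [if_pos hok]
      rw [Fintype.sum_prod_type]
      rw [hT]
      rw [Finset.mul_sum]
      refine Finset.sum_congr rfl fun a _ => ?_
      rw [Finset.mul_sum]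
      refine Finset.sum_congr rfl fun b _ => ?_
      simp only [hu, hv, if_pos hok]
      linear_combination (mC w e (P S) a b α * mC w e R b a α) * Real.mul_self_sqrt (hθ0 S)
    · rw [if_neg hok]
      refine Finset.sum_eq_zero fun ab _ => ?_
      simp only [hu, hv, if_neg hok]
      ring
  have hCS := Finset.sum_mul_sq_le_sq_mul_sq Finset.univ u v
  -- bounding ∑ u²
  have hu2 : ∑ q, u q ^ 2
      ≤ ∑ S : Finset (Fin N), θ S * pExp w fun x => frobSq (P S x) := by
    rw [Fintype.sum_prod_type]
    refine Finset.sum_le_sum fun S _ => ?_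
    rw [frob_parseval hKcard w hw e horth (P S)]
    rw [Fintype.sum_prod_type, Finset.mul_sum]
    refine Finset.sum_le_sum fun α _ => ?_
    rw [Fintype.sum_prod_type, Finset.mul_sum]
    refine Finset.sum_le_sum fun a _ => ?_
    rw [Finset.mul_sum]
    refine Finset.sum_le_sum fun b _ => ?_
    simp only [hu]
    by_cases hok : suppOf α ⊆ S ∧ D ≤ (suppOf α).card
    · rw [if_pos hok, mul_pow, Real.sq_sqrt (hθ0 S)]
    · rw [if_neg hok]
      have : (0:ℝ)^2 = 0 := by norm_num
      rw [this]
      exact mul_nonneg (hθ0 S) (sq_nonneg _)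
  -- bounding ∑ v²
  have hv2 : ∑ q, v q ^ 2 ≤ max rho 0 * pExp w fun x => frobSq (R x) := by
    have hRer : (pExp w fun x => frobSq (R x))
        = ∑ α : Fin N → Fin (K+1), ∑ a, ∑ b, (mC w e R b a α)^2 := by
      rw [frob_parseval hKcard w hw e horth R]
      exact Finset.sum_congr rfl fun α _ => Finset.sum_comm
    calc ∑ q, v q ^ 2
        = ∑ S : Finset (Fin N), ∑ α : Fin N → Fin (K+1), ∑ a : Fin l, ∑ b : Fin l,
            v (S, (α, (a, b))) ^ 2 := by simp only [Fintype.sum_prod_type]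
      _ = ∑ α : Fin N → Fin (K+1), ∑ S : Finset (Fin N), ∑ a : Fin l, ∑ b : Fin l,
            v (S, (α, (a, b))) ^ 2 := Finset.sum_comm
      _ ≤ max rho 0 * pExp w fun x => frobSq (R x) := ?_
    rw [hRer, Finset.mul_sum]
    refine Finset.sum_le_sum fun α _ => ?_
    have hinner : ∀ S : Finset (Fin N),
        (∑ a : Fin l, ∑ b : Fin l, v (S, (α, (a, b))) ^ 2)
        = if suppOf α ⊆ S ∧ D ≤ (suppOf α).card then
            θ S * ∑ a, ∑ b, (mC w e R b a α)^2 else 0 := by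
      intro S
      by_cases hok : suppOf α ⊆ S ∧ D ≤ (suppOf α).card
      · rw [if_pos hok, Finset.mul_sum]
        refine Finset.sum_congr rfl fun a _ => ?_
        rw [Finset.mul_sum]
        refine Finset.sum_congr rfl fun b _ => ?_
        simp only [hv, if_pos hok]
        rw [mul_pow, Real.sq_sqrt (hθ0 S)]
      · rw [if_neg hok]
        refine Finset.sum_eq_zero fun a _ => Finset.sum_eq_zero fun b _ => ?_
        simp only [hv, if_neg hok]
        norm_num
    rw [Finset.sum_congr rfl fun S _ => hinner S]
    have hQ : 0 ≤ ∑ a : Fin l, ∑ b : Fin l, (mC w e R b a α)^2 :=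
      Finset.sum_nonneg fun a _ => Finset.sum_nonneg fun b _ => sq_nonneg _
    by_cases hD : D ≤ (suppOf α).card
    · have hfil : (∑ S : Finset (Fin N),
          if suppOf α ⊆ S ∧ D ≤ (suppOf α).card then
            θ S * ∑ a, ∑ b, (mC w e R b a α)^2 else 0)
          = (∑ S ∈ Finset.univ.filter (fun S : Finset (Fin N) => suppOf α ⊆ S), θ S)
            * ∑ a, ∑ b, (mC w e R b a α)^2 := by
        rw [Finset.sum_mul, Finset.sum_filter]
        refine Finset.sum_congr rfl fun S _ => ?_
        by_cases hss : suppOf α ⊆ S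
        · rw [if_pos ⟨hss, hD⟩, if_pos hss]
        · rw [if_neg (fun h => hss h.1), if_neg hss]
      rw [hfil]
      calc _ ≤ rho * ∑ a, ∑ b, (mC w e R b a α)^2 :=
            mul_le_mul_of_nonneg_right (hrho (suppOf α) hD) hQ
        _ ≤ max rho 0 * ∑ a, ∑ b, (mC w e R b a α)^2 :=
            mul_le_mul_of_nonneg_right (le_max_left _ _) hQ
    · have hzero : (∑ S : Finset (Fin N),
          if suppOf α ⊆ S ∧ D ≤ (suppOf α).card then
            θ S * ∑ a, ∑ b, (mC w e R b a α)^2 else 0) = 0 :=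
        Finset.sum_eq_zero fun S _ => if_neg (fun h => hD h.2)
      rw [hzero]
      exact mul_nonneg (le_max_right _ _) hQ
  -- combine via Cauchy–Schwarz
  have hunn : 0 ≤ ∑ q, u q ^ 2 := Finset.sum_nonneg fun q _ => sq_nonneg _
  have hvnn : 0 ≤ ∑ q, v q ^ 2 := Finset.sum_nonneg fun q _ => sq_nonneg _
  set B1 := ∑ S : Finset (Fin N), θ S * pExp w fun x => frobSq (P S x) with hB1
  set B2 := pExp w fun x => frobSq (R x) with hB2
  have hB1nn : 0 ≤ B1 := le_trans hunn hu2
  have habs : |∑ q, u q * v q| ≤ Real.sqrt B1 * Real.sqrt (max rho 0 * B2) := by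
    rw [← Real.sqrt_sq_eq_abs, ← Real.sqrt_mul hB1nn]
    apply Real.sqrt_le_sqrt
    calc (∑ q, u q * v q)^2 ≤ (∑ q, u q^2) * (∑ q, v q^2) := hCS
      _ ≤ B1 * (max rho 0 * B2) := mul_le_mul hu2 hv2 hvnn hB1nn
  have hsqrtmax : Real.sqrt (max rho 0 * B2) = Real.sqrt rho * Real.sqrt B2 := by
    rw [Real.sqrt_mul (le_max_right rho 0)]
    congr 1
    rcases le_total rho 0 with h | h
    · rw [max_eq_right h, Real.sqrt_eq_zero_of_nonpos h, Real.sqrt_zero]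
    · rw [max_eq_left h]
  have hEq : pExp w (fun x => ∑ S : Finset (Fin N), θ S * (P S x * R x).trace)
      - (∑ S : Finset (Fin N), θ S *
          pExp w fun x => (P S x * truncRestrict w e R S D x).trace)
      = ∑ q, u q * v q := by
    rw [hLHS, huv, ← Finset.sum_sub_distrib]
    refine Finset.sum_congr rfl fun S _ => ?_
    rw [hTR S, ← mul_sub, hdiff S]
  have hna := neg_abs_le (∑ q, u q * v q)
  rw [hsqrtmax] at habs
  have hring : Real.sqrt B1 * (Real.sqrt rho * Real.sqrt B2)
      = Real.sqrt rho * Real.sqrt B1 * Real.sqrt B2 := by ring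
  linarith

end Stmt7
end
end

section
/- Suppose that for every Boolean tensor A ∈ {±1}^{n^k} there is a linear functional (pseudoexpectation) Ẽ_A of degree d satisfying the unit-sphere constraint with E_{A uniform} Ẽ_A ⟨x^{⊗k}, A⟩ = C. Then for a Gaussian random tensor T with i.i.d. N(0,1) entries, E_T max over degree-d pseudoexpectations Ẽ satisfying the unit-sphere constraint of Ẽ⟨x^{⊗k}, T⟩ is at least (E|g|)·C = √(2/π)·C, obtained by applying Ẽ_{sign(T)} to T, where sign(T) is the entrywise sign of T. -/
open scoped BigOperators
open MeasureTheory ProbabilityTheory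

section Stmt12Aux
open Set Filter
open scoped ENNReal NNReal

noncomputable section

lemma aux_exp_Ioi : ∫ x in Set.Ioi (0:ℝ), x * Real.exp (-x^2/2) = 1 := by
  have hd : ∀ x ∈ Set.Ici (0:ℝ),
      HasDerivAt (fun y : ℝ => -Real.exp (-y^2/2)) (x * Real.exp (-x^2/2)) x := by
    intro x _
    have h1 : HasDerivAt (fun y : ℝ => -y^2/2) (-x) x := by
      have h := ((hasDerivAt_pow 2 x).neg.div_const 2)
      refine h.congr_deriv ?_
      push_cast; ring
    have h2 := h1.exp.neg
    refine h2.congr_deriv ?_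
    ring
  have hint : IntegrableOn (fun x : ℝ => x * Real.exp (-x^2/2)) (Set.Ioi 0) := by
    have h := (integrable_mul_exp_neg_mul_sq (b := 1/2) (by norm_num)).integrableOn (s := Set.Ioi 0)
    refine h.congr_fun (fun x _ => ?_) measurableSet_Ioi
    ring_nf
  have htend : Tendsto (fun x : ℝ => -Real.exp (-x^2/2)) atTop (nhds 0) := by
    rw [← neg_zero]
    refine Tendsto.neg ?_
    have h1 : Tendsto (fun x : ℝ => -x^2/2) atTop atBot := by
      have h : Tendsto (fun x : ℝ => x^2/2) atTop atTop :=
        (tendsto_pow_atTop (by norm_num)).atTop_div_const (by norm_num)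
      have := tendsto_neg_atTop_atBot.comp h
      exact this.congr (fun x => by simp [Function.comp, neg_div])
    exact Real.tendsto_exp_atBot.comp h1
  rw [integral_Ioi_of_hasDerivAt_of_tendsto' hd hint htend]
  norm_num

lemma aux_gauss_density :
    gaussianReal 0 1 = (volume : Measure ℝ).withDensity
      (fun x => ((gaussianPDFReal 0 1 x).toNNReal : ℝ≥0∞)) := by
  rw [gaussianReal_of_var_ne_zero 0 one_ne_zero]
  rfl

lemma aux_meas_pdf : Measurable (fun x => (gaussianPDFReal 0 1 x).toNNReal) :=
  (measurable_gaussianPDFReal 0 1).real_toNNReal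

lemma aux_integral_pdf (g : ℝ → ℝ) :
    ∫ x, g x ∂(gaussianReal 0 1) = ∫ x, gaussianPDFReal 0 1 x * g x := by
  rw [aux_gauss_density, integral_withDensity_eq_integral_smul aux_meas_pdf g]
  congr 1
  ext x
  rw [NNReal.smul_def, Real.coe_toNNReal _ (gaussianPDFReal_nonneg 0 1 x)]
  rfl

lemma aux_integrable_pdf_iff (g : ℝ → ℝ) :
    Integrable g (gaussianReal 0 1) ↔
      Integrable (fun x => gaussianPDFReal 0 1 x * g x) volume := by
  rw [aux_gauss_density, integrable_withDensity_iff_integrable_smul aux_meas_pdf]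
  constructor <;> intro h <;> refine h.congr (Filter.Eventually.of_forall fun x => ?_) <;>
    simp only [NNReal.smul_def, Real.coe_toNNReal _ (gaussianPDFReal_nonneg 0 1 x), smul_eq_mul]

lemma aux_pdf_eq (x : ℝ) :
    gaussianPDFReal 0 1 x = (Real.sqrt (2 * Real.pi))⁻¹ * Real.exp (-x^2/2) := by
  simp [gaussianPDFReal]

lemma aux_integrable_id : Integrable (fun x : ℝ => x) (gaussianReal 0 1) := by
  rw [aux_integrable_pdf_iff]
  have h := (integrable_mul_exp_neg_mul_sq (b := 1/2) (by norm_num)).const_mul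
    ((Real.sqrt (2 * Real.pi))⁻¹)
  refine h.congr (Filter.Eventually.of_forall fun x => ?_)
  simp only [aux_pdf_eq]
  ring_nf

lemma aux_map_neg : (gaussianReal 0 1).map (fun x : ℝ => -x) = gaussianReal 0 1 := by
  have h := gaussianReal_map_const_mul (μ := 0) (v := 1) (-1)
  have h2 : (⟨(-1:ℝ)^2, sq_nonneg _⟩ : ℝ≥0) * 1 = 1 := by
    ext; norm_num
  rw [show (NNReal.mk ((-1:ℝ)^2) (sq_nonneg _) * 1 : ℝ≥0) = 1 from h2] at h
  simpa [neg_one_mul] using h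

lemma aux_measure_Ioi : gaussianReal 0 1 (Set.Ioi 0) = 1/2 := by
  have h0 : gaussianReal 0 1 ({0} : Set ℝ) = 0 :=
    gaussianReal_absolutelyContinuous 0 one_ne_zero (by simp)
  have hmap : gaussianReal 0 1 (Set.Iio 0) = gaussianReal 0 1 (Set.Ioi 0) := by
    conv_lhs => rw [← aux_map_neg]
    rw [Measure.map_apply measurable_neg measurableSet_Iio]
    congr 1
    ext x
    simp
  have hu : gaussianReal 0 1 (Set.Iic 0) + gaussianReal 0 1 (Set.Ioi 0) = 1 := by
    rw [← measure_union (by simp [Set.disjoint_left]) measurableSet_Ioi]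
    rw [Set.Iic_union_Ioi]
    simp
  have hIic : gaussianReal 0 1 (Set.Iic 0) = gaussianReal 0 1 (Set.Ioi 0) := by
    rw [← Set.Iio_union_right, measure_union (by simp) (measurableSet_singleton 0), h0, add_zero,
      hmap]
  rw [hIic] at hu
  have h2 : 2 * gaussianReal 0 1 (Set.Ioi 0) = 1 := by rw [two_mul]; exact hu
  calc gaussianReal 0 1 (Set.Ioi 0)
      = 2⁻¹ * (2 * gaussianReal 0 1 (Set.Ioi 0)) := by
        rw [← mul_assoc, ENNReal.inv_mul_cancel (by norm_num) (by norm_num), one_mul]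
    _ = 1/2 := by rw [h2, mul_one, one_div]

lemma aux_measure_Iic : gaussianReal 0 1 (Set.Iic 0) = 1/2 := by
  have hu : gaussianReal 0 1 (Set.Iic 0) + gaussianReal 0 1 (Set.Ioi 0) = 1 := by
    rw [← measure_union (by simp [Set.disjoint_left]) measurableSet_Ioi]
    rw [Set.Iic_union_Ioi]
    simp
  rw [aux_measure_Ioi] at hu
  have := ENNReal.eq_sub_of_add_eq (by norm_num) hu
  rw [this]
  norm_num

lemma aux_fun_true : (fun x : ℝ => (if decide (0 < x) = true then (1:ℝ) else 0))
    = (Set.Ioi 0).indicator (fun _ => 1) := by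
  funext x; by_cases h : 0 < x <;> simp [h, Set.indicator]

lemma aux_fun_false : (fun x : ℝ => (if decide (0 < x) = false then (1:ℝ) else 0))
    = (Set.Iic 0).indicator (fun _ => 1) := by
  funext x; by_cases h : 0 < x <;> simp [h, Set.indicator, not_le.mpr, not_lt.mp]

lemma aux_funx_true : (fun x : ℝ => (if decide (0 < x) = true then (1:ℝ) else 0) * x)
    = (Set.Ioi 0).indicator id := by
  funext x; by_cases h : 0 < x <;> simp [h, Set.indicator]

lemma aux_funx_false : (fun x : ℝ => (if decide (0 < x) = false then (1:ℝ) else 0) * x)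
    = (Set.Iic 0).indicator id := by
  funext x; by_cases h : 0 < x <;> simp [h, Set.indicator]

lemma aux_integrable_ind (b : Bool) :
    Integrable (fun x : ℝ => (if decide (0 < x) = b then (1:ℝ) else 0)) (gaussianReal 0 1) := by
  cases b
  · rw [aux_fun_false]; exact (integrable_const 1).indicator measurableSet_Iic
  · rw [aux_fun_true]; exact (integrable_const 1).indicator measurableSet_Ioi

lemma aux_integrable_ind_mul (b : Bool) :
    Integrable (fun x : ℝ => (if decide (0 < x) = b then (1:ℝ) else 0) * x)
      (gaussianReal 0 1) := by
  cases b
  · rw [aux_funx_false]; exact aux_integrable_id.indicator measurableSet_Iic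
  · rw [aux_funx_true]; exact aux_integrable_id.indicator measurableSet_Ioi

lemma aux_integral_ind (b : Bool) :
    ∫ x, (if decide (0 < x) = b then (1:ℝ) else 0) ∂(gaussianReal 0 1) = 1/2 := by
  cases b
  · rw [aux_fun_false, integral_indicator_const _ measurableSet_Iic]
    simp [measureReal_def, aux_measure_Iic]
  · rw [aux_fun_true, integral_indicator_const _ measurableSet_Ioi]
    simp [measureReal_def, aux_measure_Ioi]

lemma aux_integral_indx_true :
    ∫ x, (if decide (0 < x) = true then (1:ℝ) else 0) * x ∂(gaussianReal 0 1)
      = (Real.sqrt (2 * Real.pi))⁻¹ := by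
  rw [aux_funx_true, aux_integral_pdf]
  have h : (fun x : ℝ => gaussianPDFReal 0 1 x * (Set.Ioi 0).indicator id x)
      = (Set.Ioi 0).indicator (fun x => (Real.sqrt (2 * Real.pi))⁻¹ * (x * Real.exp (-x^2/2))) := by
    funext x
    by_cases h : 0 < x <;> simp [h, Set.indicator, aux_pdf_eq]
    ring
  rw [h, integral_indicator measurableSet_Ioi, integral_const_mul, aux_exp_Ioi, mul_one]

lemma aux_integral_neg (g : ℝ → ℝ) (hg : Measurable g) :
    ∫ x, g x ∂(gaussianReal 0 1) = ∫ x, g (-x) ∂(gaussianReal 0 1) := by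
  conv_lhs => rw [← aux_map_neg]
  rw [integral_map measurable_neg.aemeasurable hg.aestronglyMeasurable]

lemma aux_integral_indx_false :
    ∫ x, (if decide (0 < x) = false then (1:ℝ) else 0) * x ∂(gaussianReal 0 1)
      = -(Real.sqrt (2 * Real.pi))⁻¹ := by
  rw [aux_funx_false]
  rw [aux_integral_neg _ (measurable_id.indicator measurableSet_Iic)]
  have h : (fun x : ℝ => (Set.Iic 0).indicator (id : ℝ → ℝ) (-x))
      = fun x : ℝ => -((Set.Ioi 0).indicator (id : ℝ → ℝ) x) := by
    funext x
    rcases lt_trichotomy 0 x with h | h | h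
    · simp [Set.indicator, h, le_of_lt h, not_le.mpr h]
    · simp [Set.indicator, ← h]
    · simp [Set.indicator, h, not_lt.mpr (le_of_lt h), le_of_lt h]
  rw [h, integral_neg, ← aux_funx_true, aux_integral_indx_true]

lemma aux_integral_ind_mul (b : Bool) :
    ∫ x, (if decide (0 < x) = b then (1:ℝ) else 0) * x ∂(gaussianReal 0 1)
      = (if b then (1:ℝ) else -1) * (Real.sqrt (2 * Real.pi))⁻¹ := by
  cases b
  · rw [aux_integral_indx_false]; simp
  · rw [aux_integral_indx_true]; simp

lemma aux_pi_integral {ι : Type*} [Fintype ι] (f : ι → ℝ → ℝ) :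
    ∫ x : ι → ℝ, ∏ i, f i (x i) ∂(Measure.pi fun _ : ι => gaussianReal 0 1)
      = ∏ i, ∫ x, f i x ∂(gaussianReal 0 1) := by
  letI : MeasureSpace ℝ := ⟨gaussianReal 0 1⟩
  haveI : SigmaFinite (volume : Measure ℝ) := inferInstanceAs (SigmaFinite (gaussianReal 0 1))
  exact MeasureTheory.integral_fintype_prod_eq_prod f

lemma aux_pi_integrable {ι : Type*} [Fintype ι] (f : ι → ℝ → ℝ)
    (hf : ∀ i, Integrable (f i) (gaussianReal 0 1)) :
    Integrable (fun x : ι → ℝ => ∏ i, f i (x i))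
      (Measure.pi fun _ : ι => gaussianReal 0 1) := by
  letI : MeasureSpace ℝ := ⟨gaussianReal 0 1⟩
  haveI : SigmaFinite (volume : Measure ℝ) := inferInstanceAs (SigmaFinite (gaussianReal 0 1))
  exact Integrable.fintype_prod hf

lemma aux_sqrt_key : Real.sqrt (2 / Real.pi) = 2 * (Real.sqrt (2 * Real.pi))⁻¹ := by
  have hπ : (0:ℝ) < Real.pi := Real.pi_pos
  have h2π : (0:ℝ) < Real.sqrt (2 * Real.pi) := Real.sqrt_pos.mpr (by positivity)
  symm
  rw [mul_inv_eq_iff_eq_mul₀ h2π.ne']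
  rw [← Real.sqrt_mul (by positivity : (0:ℝ) ≤ 2 / Real.pi)]
  rw [show (2 / Real.pi) * (2 * Real.pi) = 2 ^ 2 by field_simp]
  rw [Real.sqrt_sq (by norm_num : (0:ℝ) ≤ 2)]

variable {ι : Type*} [Fintype ι] [DecidableEq ι]

/-- The single-coordinate factor function. -/
def auxH (A : ι → Bool) (α β : ι) : ℝ → ℝ :=
  fun t => (if decide (0 < t) = A β then (1:ℝ) else 0) * (if β = α then t else 1)

lemma auxH_integrable (A : ι → Bool) (α β : ι) :
    Integrable (auxH A α β) (gaussianReal 0 1) := by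
  by_cases hβ : β = α
  · subst hβ
    have h : auxH A β β = fun t : ℝ => (if decide (0 < t) = A β then (1:ℝ) else 0) * t := by
      funext t; simp [auxH]
    rw [h]; exact aux_integrable_ind_mul (A β)
  · have h : auxH A α β = fun t : ℝ => (if decide (0 < t) = A β then (1:ℝ) else 0) := by
      funext t; simp [auxH, hβ]
    rw [h]; exact aux_integrable_ind (A β)

lemma auxH_integral (A : ι → Bool) (α β : ι) :
    ∫ t, auxH A α β t ∂(gaussianReal 0 1)
      = if β = α then (if A α then (1:ℝ) else -1) * (Real.sqrt (2 * Real.pi))⁻¹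
        else 1/2 := by
  by_cases hβ : β = α
  · subst hβ
    have h : auxH A β β = fun t : ℝ => (if decide (0 < t) = A β then (1:ℝ) else 0) * t := by
      funext t; simp [auxH]
    rw [if_pos rfl, h]; exact aux_integral_ind_mul (A β)
  · have h : auxH A α β = fun t : ℝ => (if decide (0 < t) = A β then (1:ℝ) else 0) := by
      funext t; simp [auxH, hβ]
    rw [if_neg hβ, h]; exact aux_integral_ind (A β)

lemma auxH_prod (A : ι → Bool) (α : ι) (T : ι → ℝ) :
    ∏ β, auxH A α β (T β)
      = (if (fun β => decide (0 < T β)) = A then (1:ℝ) else 0) * T α := by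
  unfold auxH
  rw [Finset.prod_mul_distrib]
  congr 1
  · rw [Finset.prod_boole]
    simp [funext_iff]
  · simpa using Finset.prod_ite_eq' Finset.univ α (fun β => T β)

lemma auxH_prod_integral (A : ι → Bool) (α : ι) :
    ∏ β, ∫ t, auxH A α β t ∂(gaussianReal 0 1)
      = (if A α then (1:ℝ) else -1) * (Real.sqrt (2 * Real.pi))⁻¹
        * (1/2) ^ (Fintype.card ι - 1) := by
  simp only [auxH_integral]
  rw [← Finset.mul_prod_erase Finset.univ _ (Finset.mem_univ α)]
  rw [if_pos rfl]
  congr 1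
  rw [Finset.prod_congr rfl (fun β hβ => if_neg (Finset.ne_of_mem_erase hβ))]
  rw [Finset.prod_const, Finset.card_erase_of_mem (Finset.mem_univ α), Finset.card_univ]

end
end Stmt12Aux

/-- From Boolean to Gaussian lower bounds. Abstract degree-`d` pseudoexpectations for
Boolean tensors `A ∈ {±1}^{n^k}` are modelled as assignments `pE A : (Fin k → Fin n) → ℝ`
of a value `Ẽ_A x^α` to each degree-`k` monomial. If on average over uniform Boolean `A`
the value `Ẽ_A⟨x^{⊗k}, A⟩` equals `C`, then for a Gaussian tensor `T` the value obtained
by applying `Ẽ_{sign(T)}` to `T` has expectation `E|g| · C = √(2/π) · C`; hence any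
pointwise upper bound (such as the max over pseudoexpectations) has expectation at least
`√(2/π) · C`. -/
theorem stmt12 (n k : ℕ) (C : ℝ)
    (pE : ((Fin k → Fin n) → Bool) → ((Fin k → Fin n) → ℝ))
    (hC : (1 / 2 ^ Fintype.card (Fin k → Fin n) : ℝ) *
        ∑ A : (Fin k → Fin n) → Bool,
          ∑ α : Fin k → Fin n, pE A α * (if A α then (1 : ℝ) else -1) = C) :
    (∫ T : (Fin k → Fin n) → ℝ,
        (∑ α : Fin k → Fin n, pE (fun β => decide (0 < T β)) α * T α)
        ∂(Measure.pi fun _ : Fin k → Fin n => gaussianReal 0 1))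
      = Real.sqrt (2 / Real.pi) * C ∧
    ∀ maxVal : ((Fin k → Fin n) → ℝ) → ℝ,
      Integrable maxVal (Measure.pi fun _ : Fin k → Fin n => gaussianReal 0 1) →
      (∀ T, (∑ α : Fin k → Fin n, pE (fun β => decide (0 < T β)) α * T α) ≤ maxVal T) →
      Real.sqrt (2 / Real.pi) * C ≤
        ∫ T : (Fin k → Fin n) → ℝ, maxVal T
          ∂(Measure.pi fun _ : Fin k → Fin n => gaussianReal 0 1) := by
  classical
  set N := Fintype.card (Fin k → Fin n) with hN
  have hpoint : ∀ T : (Fin k → Fin n) → ℝ,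
      (∑ α : Fin k → Fin n, pE (fun β => decide (0 < T β)) α * T α)
        = ∑ α : Fin k → Fin n, ∑ A : (Fin k → Fin n) → Bool,
            pE A α * ∏ β, auxH A α β (T β) := by
    intro T
    refine Finset.sum_congr rfl fun α _ => ?_
    rw [eq_comm]
    calc ∑ A : (Fin k → Fin n) → Bool, pE A α * ∏ β, auxH A α β (T β)
        = ∑ A : (Fin k → Fin n) → Bool,
            (if (fun β => decide (0 < T β)) = A then pE A α * T α else 0) := by
          refine Finset.sum_congr rfl fun A _ => ?_
          rw [auxH_prod]
          by_cases hA : (fun β => decide (0 < T β)) = A <;> simp [hA]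
      _ = pE (fun β => decide (0 < T β)) α * T α := by
          rw [Finset.sum_ite_eq]
          simp
  have hGint : ∀ (α : Fin k → Fin n) (A : (Fin k → Fin n) → Bool),
      Integrable (fun T : (Fin k → Fin n) → ℝ => pE A α * ∏ β, auxH A α β (T β))
        (Measure.pi fun _ : Fin k → Fin n => gaussianReal 0 1) :=
    fun α A => (aux_pi_integrable _ (fun β => auxH_integrable A α β)).const_mul _
  have hfint : Integrable (fun T : (Fin k → Fin n) → ℝ =>
      ∑ α : Fin k → Fin n, pE (fun β => decide (0 < T β)) α * T α)
      (Measure.pi fun _ : Fin k → Fin n => gaussianReal 0 1) := by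
    have h : (fun T : (Fin k → Fin n) → ℝ =>
        ∑ α : Fin k → Fin n, pE (fun β => decide (0 < T β)) α * T α)
        = fun T => ∑ α : Fin k → Fin n, ∑ A : (Fin k → Fin n) → Bool,
            pE A α * ∏ β, auxH A α β (T β) := funext hpoint
    rw [h]
    exact integrable_finset_sum _ (fun α _ =>
      integrable_finset_sum _ (fun A _ => hGint α A))
  have h2N : ((2:ℝ)) ^ N ≠ 0 := by positivity
  have hS : ∑ A : (Fin k → Fin n) → Bool,
      ∑ α : Fin k → Fin n, pE A α * (if A α then (1:ℝ) else -1)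
      = 2 ^ N * C := by
    rw [← hC]
    field_simp
  have hEq : (∫ T : (Fin k → Fin n) → ℝ,
        (∑ α : Fin k → Fin n, pE (fun β => decide (0 < T β)) α * T α)
        ∂(Measure.pi fun _ : Fin k → Fin n => gaussianReal 0 1))
      = Real.sqrt (2 / Real.pi) * C := by
    have hI : (∫ T : (Fin k → Fin n) → ℝ,
          (∑ α : Fin k → Fin n, pE (fun β => decide (0 < T β)) α * T α)
          ∂(Measure.pi fun _ : Fin k → Fin n => gaussianReal 0 1))
        = ((Real.sqrt (2 * Real.pi))⁻¹ * (1/2) ^ (N - 1)) * (2 ^ N * C) := by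
      simp only [hpoint]
      rw [integral_finset_sum _ (fun α _ =>
        integrable_finset_sum _ (fun A _ => hGint α A))]
      have hstep : ∀ α : Fin k → Fin n,
          (∫ T : (Fin k → Fin n) → ℝ,
            (∑ A : (Fin k → Fin n) → Bool, pE A α * ∏ β, auxH A α β (T β))
            ∂(Measure.pi fun _ : Fin k → Fin n => gaussianReal 0 1))
          = ∑ A : (Fin k → Fin n) → Bool,
              pE A α * ((if A α then (1:ℝ) else -1)
                * (Real.sqrt (2 * Real.pi))⁻¹ * (1/2) ^ (N - 1)) := by
        intro α
        rw [integral_finset_sum _ (fun A _ => hGint α A)]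
        refine Finset.sum_congr rfl fun A _ => ?_
        rw [integral_const_mul, aux_pi_integral, auxH_prod_integral]
      simp only [hstep]
      rw [Finset.sum_comm, ← hS, Finset.mul_sum]
      refine Finset.sum_congr rfl fun A _ => ?_
      rw [Finset.mul_sum]
      refine Finset.sum_congr rfl fun α _ => ?_
      ring
    rw [hI]
    by_cases hN0 : N = 0
    · have he : IsEmpty (Fin k → Fin n) := Fintype.card_eq_zero_iff.mp hN0
      have hC0 : C = 0 := by rw [← hC]; simp
      simp [hC0]
    · obtain ⟨m, hm⟩ : ∃ m, N = m + 1 :=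
        ⟨N - 1, (Nat.succ_pred_eq_of_pos (Nat.pos_of_ne_zero hN0)).symm⟩
      rw [hm, aux_sqrt_key]
      have hpow : ((1:ℝ)/2) ^ m * 2 ^ (m+1) = 2 := by
        rw [pow_succ, one_div, inv_pow, ← mul_assoc, inv_mul_cancel₀ (by positivity), one_mul]
      calc (Real.sqrt (2*Real.pi))⁻¹ * (1/2) ^ (m+1-1) * (2 ^ (m+1) * C)
          = ((1/2) ^ m * 2 ^ (m+1)) * ((Real.sqrt (2*Real.pi))⁻¹ * C) := by
            rw [Nat.add_sub_cancel]; ring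
        _ = 2 * ((Real.sqrt (2*Real.pi))⁻¹ * C) := by rw [hpow]
        _ = 2 * (Real.sqrt (2*Real.pi))⁻¹ * C := by ring
  refine ⟨hEq, fun maxVal hmax hle => ?_⟩
  rw [← hEq]
  exact integral_mono hfint hmax hle
end

section
/- Let D be the uniform distribution on k-sparse Boolean vectors {x ∈ {0,1}ⁿ : ∑ᵢ xᵢ = k}, with 2d ≤ k. Then every nonzero eigenvalue of the moment matrix X_D = E_{x∼D}[(x^{⊗≤d})(x^{⊗≤d})ᵀ] (indexed by multilinear monomials of degree ≤ d) is at least n^{−Cd} for some absolute constant C; i.e., D is n^{−O(d)}-spectrally rich up to degree 2d. -/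
open scoped BigOperators Classical

noncomputable section

/-- The degree-`2d` moment matrix `X_D = E_{x∼D}[(x^{⊗≤d})(x^{⊗≤d})ᵀ]` of the uniform
distribution `D` on `k`-sparse Boolean vectors `{x ∈ {0,1}ⁿ : ∑ xᵢ = k}`, indexed by
multilinear monomials (subsets of `[n]` of size `≤ d`); note `x_α = 1` iff `α ⊆ supp x`. -/
def sparseMoment (n k d : ℕ) :
    Matrix {s : Finset (Fin n) // s.card ≤ d} {s : Finset (Fin n) // s.card ≤ d} ℝ :=
  ((n.choose k : ℝ))⁻¹ •
    ∑ t ∈ Finset.univ.filter (fun t : Finset (Fin n) => t.card = k),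
      Matrix.of fun α β : {s : Finset (Fin n) // s.card ≤ d} =>
        if α.1 ⊆ t ∧ β.1 ⊆ t then (1 : ℝ) else 0

section Aux
open Finset Matrix

lemma card_sandwich {n : ℕ} (F t : Finset (Fin n)) (m : ℕ) (hFt : F ⊆ t) (hFm : F.card ≤ m) :
    (Finset.univ.filter (fun b : Finset (Fin n) => F ⊆ b ∧ b ⊆ t ∧ b.card = m)).card
      = (t.card - F.card).choose (m - F.card) := by
  rw [← Finset.card_sdiff_of_subset hFt, ← Finset.card_powersetCard (m - F.card) (t \ F)]
  apply Finset.card_nbij' (fun b => b \ F) (fun c => c ∪ F)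
  · intro b hb
    simp only [Finset.mem_coe, Finset.mem_filter, Finset.mem_univ, true_and] at hb
    obtain ⟨h1, h2, h3⟩ := hb
    rw [Finset.mem_coe, Finset.mem_powersetCard]
    constructor
    · exact Finset.sdiff_subset_sdiff h2 le_rfl
    · rw [Finset.card_sdiff_of_subset h1, h3]
  · intro c hc
    rw [Finset.mem_coe, Finset.mem_powersetCard] at hc
    obtain ⟨h1, h2⟩ := hc
    simp only [Finset.mem_coe, Finset.mem_filter, Finset.mem_univ, true_and]
    refine ⟨Finset.subset_union_right, Finset.union_subset (h1.trans Finset.sdiff_subset) hFt, ?_⟩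
    rw [Finset.card_union_of_disjoint, h2]
    · omega
    · exact Finset.disjoint_of_subset_left h1 (Finset.sdiff_disjoint)
  · intro b hb
    simp only [Finset.mem_coe, Finset.mem_filter, Finset.mem_univ, true_and] at hb
    exact Finset.sdiff_union_of_subset hb.1
  · intro c hc
    rw [Finset.mem_coe, Finset.mem_powersetCard] at hc
    exact Finset.union_sdiff_cancel_right (Finset.disjoint_of_subset_left hc.1 Finset.sdiff_disjoint)

lemma sum_ind {n : ℕ} (m : ℕ) (F t : Finset (Fin n)) (hFt : F ⊆ t) (hFm : F.card ≤ m) :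
    (∑ b : {s : Finset (Fin n) // s.card = m}, if F ⊆ b.1 ∧ b.1 ⊆ t then (1:ℝ) else 0)
      = ((t.card - F.card).choose (m - F.card) : ℝ) := by
  rw [← card_sandwich F t m hFt hFm]
  rw [← Finset.sum_subtype (Finset.univ.filter (fun b : Finset (Fin n) => b.card = m))
      (by simp) (fun b => if F ⊆ b ∧ b ⊆ t then (1:ℝ) else 0)]
  rw [Finset.sum_boole, Finset.filter_filter]
  norm_num
  congr 1
  apply Finset.filter_congr
  intro x _
  tauto

namespace SM

def Dp (n k d : ℕ) : ℕ := min d (n - k)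

def Vm (n k d : ℕ) :
    Matrix {s : Finset (Fin n) // s.card = k} {s : Finset (Fin n) // s.card ≤ d} ℝ :=
  Matrix.of fun t α => if α.1 ⊆ t.1 then 1 else 0

def Um (n k d : ℕ) :
    Matrix {s : Finset (Fin n) // s.card = k} {s : Finset (Fin n) // s.card = Dp n k d} ℝ :=
  Matrix.of fun t β => if β.1 ⊆ t.1 then 1 else 0

def Wm (n k d : ℕ) :
    Matrix {s : Finset (Fin n) // s.card = k} {s : Finset (Fin n) // s.card ≤ Dp n k d} ℝ :=
  Matrix.of fun t T => if T.1 ⊆ t.1 then 1 else 0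

def Wi (n k d i : ℕ) :
    Matrix {s : Finset (Fin n) // s.card = i} {s : Finset (Fin n) // s.card = Dp n k d} ℝ :=
  Matrix.of fun γ β => if γ.1 ⊆ β.1 then 1 else 0

def S1 (n k d : ℕ) :
    Matrix {s : Finset (Fin n) // s.card ≤ d} {s : Finset (Fin n) // s.card ≤ Dp n k d} ℝ :=
  Matrix.of fun α T =>
    ∑ S ∈ α.1.powerset.filter (fun S => S.card ≤ Dp n k d),
      if T.1 ⊆ S then (-1:ℝ)^(S.card - T.1.card) else 0

def S2 (n k d : ℕ) :
    Matrix {s : Finset (Fin n) // s.card ≤ Dp n k d} {s : Finset (Fin n) // s.card = Dp n k d} ℝ :=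
  Matrix.of fun T β =>
    if T.1 ⊆ β.1 then (((k - T.1.card).choose (Dp n k d - T.1.card) : ℕ) : ℝ)⁻¹ else 0

def Sm (n k d : ℕ) := S1 n k d * S2 n k d

def Bm (n k d : ℕ) := (Um n k d)ᵀ * Um n k d

lemma sparseMoment_eq (n k d : ℕ) :
    sparseMoment n k d = ((n.choose k : ℝ))⁻¹ • ((Vm n k d)ᵀ * (Vm n k d)) := by
  unfold sparseMoment Vm
  congr 1
  ext α β
  rw [Matrix.sum_apply, Matrix.mul_apply]
  simp only [Matrix.of_apply, Matrix.transpose_apply]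
  rw [Finset.sum_subtype (p := fun t : Finset (Fin n) => t.card = k) (Finset.univ.filter (fun t : Finset (Fin n) => t.card = k))
      (by simp) (fun t => if α.1 ⊆ t ∧ β.1 ⊆ t then (1:ℝ) else 0)]
  apply Finset.sum_congr rfl
  intro t _
  split_ifs with h1 h2 h3 <;> simp_all

variable {n k d : ℕ}


lemma neg_one_pow_sub {a b : ℕ} (h : b ≤ a) : (-1:ℝ)^(a-b) = (-1)^a * (-1)^b := by
  obtain ⟨c, rfl⟩ := Nat.exists_eq_add_of_le h
  rw [Nat.add_sub_cancel_left, pow_add]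
  ring_nf
  rw [mul_comm b 2, pow_mul]
  norm_num

lemma sum_pow_card_real (x : Finset (Fin n)) :
    ∑ m ∈ x.powerset, (-1:ℝ)^m.card = if x = ∅ then 1 else 0 := by
  have h := Finset.sum_powerset_neg_one_pow_card (x := x)
  have h2 := congrArg (fun z : ℤ => (z : ℝ)) h
  simp only [Int.cast_sum, Int.cast_pow, Int.cast_neg, Int.cast_one] at h2
  rw [h2]
  split_ifs <;> norm_num

lemma Dp_le_k (hd : 2*d ≤ k) : Dp n k d ≤ k := le_trans (min_le_left _ _) (by omega)

lemma W_eq (hd : 2*d ≤ k) : Wm n k d = Um n k d * (S2 n k d)ᵀ := by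
  ext t T
  rw [Matrix.mul_apply]
  simp only [Wm, Um, S2, Matrix.of_apply, Matrix.transpose_apply]
  have hT : T.1.card ≤ Dp n k d := T.2
  have hDk : Dp n k d ≤ k := Dp_le_k hd
  set c : ℝ := (((k - T.1.card).choose (Dp n k d - T.1.card) : ℕ) : ℝ) with hc
  have hpos : 0 < (k - T.1.card).choose (Dp n k d - T.1.card) := Nat.choose_pos (by omega)
  by_cases hTt : T.1 ⊆ t.1
  · rw [if_pos hTt]
    have step : ∀ b : {s : Finset (Fin n) // s.card = Dp n k d},
        (if b.1 ⊆ t.1 then (1:ℝ) else 0) * (if T.1 ⊆ b.1 then c⁻¹ else 0)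
        = c⁻¹ * (if T.1 ⊆ b.1 ∧ b.1 ⊆ t.1 then (1:ℝ) else 0) := by
      intro b
      by_cases h1 : b.1 ⊆ t.1 <;> by_cases h2 : T.1 ⊆ b.1 <;> simp [h1, h2]
    rw [Finset.sum_congr rfl (fun b _ => step b), ← Finset.mul_sum,
      sum_ind (Dp n k d) T.1 t.1 hTt hT, t.2]
    rw [hc]
    rw [inv_mul_cancel₀ (by exact_mod_cast hpos.ne')]
  · rw [if_neg hTt]
    symm
    apply Finset.sum_eq_zero
    intro b _
    by_cases h1 : b.1 ⊆ t.1 <;> by_cases h2 : T.1 ⊆ b.1 <;> simp [h1, h2]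
    exact absurd (h2.trans h1) hTt

lemma V_eq (hk : k ≤ n) : Vm n k d = Wm n k d * (S1 n k d)ᵀ := by
  ext t α
  rw [Matrix.mul_apply]
  simp only [Vm, Wm, S1, Matrix.of_apply, Matrix.transpose_apply]
  rw [← Finset.sum_subtype (p := fun T : Finset (Fin n) => T.card ≤ Dp n k d)
      (Finset.univ.filter fun T : Finset (Fin n) => T.card ≤ Dp n k d) (by simp)
      (fun T => (if T ⊆ t.1 then (1:ℝ) else 0) *
        ∑ S ∈ α.1.powerset.filter (fun S => S.card ≤ Dp n k d),
          if T ⊆ S then (-1:ℝ)^(S.card - T.card) else 0)]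
  simp only [Finset.mul_sum]
  rw [Finset.sum_comm]
  have inner : ∀ S ∈ α.1.powerset.filter (fun S => S.card ≤ Dp n k d),
      (∑ T ∈ Finset.univ.filter (fun T : Finset (Fin n) => T.card ≤ Dp n k d),
        (if T ⊆ t.1 then (1:ℝ) else 0) * (if T ⊆ S then (-1:ℝ)^(S.card - T.card) else 0))
      = if S ∩ t.1 = ∅ then (-1:ℝ)^S.card else 0 := by
    intro S hS
    rw [Finset.mem_filter, Finset.mem_powerset] at hS
    have e1 : ∀ T ∈ Finset.univ.filter (fun T : Finset (Fin n) => T.card ≤ Dp n k d),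
        (if T ⊆ t.1 then (1:ℝ) else 0) * (if T ⊆ S then (-1:ℝ)^(S.card - T.card) else 0)
        = if T ⊆ S ∩ t.1 then (-1:ℝ)^(S.card - T.card) else 0 := by
      intro T _
      by_cases h1 : T ⊆ t.1 <;> by_cases h2 : T ⊆ S <;>
        simp [h1, h2, Finset.subset_inter_iff] <;> tauto
    rw [Finset.sum_congr rfl e1, ← Finset.sum_filter]
    have e2 : (Finset.univ.filter (fun T : Finset (Fin n) => T.card ≤ Dp n k d)).filter
        (fun T => T ⊆ S ∩ t.1) = (S ∩ t.1).powerset := by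
      ext T
      simp only [Finset.mem_filter, Finset.mem_powerset, Finset.mem_univ, true_and]
      constructor
      · exact fun h => h.2
      · intro h
        exact ⟨le_trans (Finset.card_le_card (h.trans Finset.inter_subset_left)) hS.2, h⟩
    rw [e2]
    have e3 : ∀ T ∈ (S ∩ t.1).powerset, (-1:ℝ)^(S.card - T.card) = (-1)^S.card * (-1)^T.card :=
      fun T hT => neg_one_pow_sub
        (Finset.card_le_card ((Finset.mem_powerset.1 hT).trans Finset.inter_subset_left))
    rw [Finset.sum_congr rfl e3, ← Finset.mul_sum, sum_pow_card_real]
    split_ifs <;> ring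
  rw [Finset.sum_congr rfl inner, ← Finset.sum_filter]
  have hcard : (α.1 \ t.1).card ≤ Dp n k d := by
    have hc1 : (α.1 \ t.1).card ≤ d := le_trans (Finset.card_le_card Finset.sdiff_subset) α.2
    have hc2 : (α.1 \ t.1).card ≤ n - k := by
      have hsub : α.1 \ t.1 ⊆ Finset.univ \ t.1 :=
        Finset.sdiff_subset_sdiff (Finset.subset_univ _) (Finset.Subset.refl _)
      have h3 := Finset.card_le_card hsub
      rwa [Finset.card_sdiff_of_subset (Finset.subset_univ _), Finset.card_univ, Fintype.card_fin, t.2] at h3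
    exact le_min hc1 hc2
  have e4 : (α.1.powerset.filter (fun S => S.card ≤ Dp n k d)).filter
      (fun S => S ∩ t.1 = ∅) = (α.1 \ t.1).powerset := by
    ext S
    simp only [Finset.mem_filter, Finset.mem_powerset]
    constructor
    · rintro ⟨⟨hSα, _⟩, hdisj⟩
      intro x hx
      rw [Finset.mem_sdiff]
      refine ⟨hSα hx, fun hxt => ?_⟩
      exact (Finset.eq_empty_iff_forall_notMem.1 hdisj x (Finset.mem_inter.2 ⟨hx, hxt⟩))
    · intro hS
      refine ⟨⟨hS.trans Finset.sdiff_subset, le_trans (Finset.card_le_card hS) hcard⟩, ?_⟩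
      rw [Finset.eq_empty_iff_forall_notMem]
      rintro x hx
      rw [Finset.mem_inter] at hx
      exact (Finset.mem_sdiff.1 (hS hx.1)).2 hx.2
  rw [e4, sum_pow_card_real]
  simp [Finset.sdiff_eq_empty_iff_subset]

def iota (n k d : ℕ) (b : {s : Finset (Fin n) // s.card = Dp n k d}) :
    {s : Finset (Fin n) // s.card ≤ d} :=
  ⟨b.1, le_trans (le_of_eq b.2) (min_le_left _ _)⟩

lemma S1_row (b : {s : Finset (Fin n) // s.card = Dp n k d})
    (T : {s : Finset (Fin n) // s.card ≤ Dp n k d}) :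
    S1 n k d (iota n k d b) T = if T.1 = b.1 then 1 else 0 := by
  simp only [S1, iota, Matrix.of_apply]
  have hfil : (b.1.powerset.filter (fun S => S.card ≤ Dp n k d)) = b.1.powerset := by
    apply Finset.filter_true_of_mem
    intro S hS
    exact le_trans (Finset.card_le_card (Finset.mem_powerset.1 hS)) (le_of_eq b.2)
  rw [hfil]
  by_cases hTb : T.1 ⊆ b.1
  · rw [← Finset.sum_filter]
    have hre : ∑ S ∈ b.1.powerset.filter (fun S => T.1 ⊆ S), (-1:ℝ)^(S.card - T.1.card)
        = ∑ R ∈ (b.1 \ T.1).powerset, (-1:ℝ)^R.card := by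
      apply Finset.sum_nbij' (fun S => S \ T.1) (fun R => R ∪ T.1)
      · intro S hS
        rw [Finset.mem_filter, Finset.mem_powerset] at hS
        rw [Finset.mem_powerset]
        exact Finset.sdiff_subset_sdiff hS.1 le_rfl
      · intro R hR
        rw [Finset.mem_powerset] at hR
        rw [Finset.mem_filter, Finset.mem_powerset]
        exact ⟨Finset.union_subset (hR.trans Finset.sdiff_subset) hTb, Finset.subset_union_right⟩
      · intro S hS
        rw [Finset.mem_filter] at hS
        exact Finset.sdiff_union_of_subset hS.2
      · intro R hR
        rw [Finset.mem_powerset] at hR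
        exact Finset.union_sdiff_cancel_right
          (Finset.disjoint_of_subset_left hR Finset.sdiff_disjoint)
      · intro S hS
        rw [Finset.mem_filter] at hS
        rw [Finset.card_sdiff_of_subset hS.2]
    rw [hre, sum_pow_card_real]
    have : b.1 \ T.1 = ∅ ↔ T.1 = b.1 := by
      rw [Finset.sdiff_eq_empty_iff_subset]
      constructor
      · exact fun h => Finset.Subset.antisymm hTb h
      · exact fun h => le_of_eq h.symm
    split_ifs with h1 h2 h3 <;> simp_all
  · have h0 : ∀ S ∈ b.1.powerset, (if T.1 ⊆ S then (-1:ℝ)^(S.card - T.1.card) else 0) = 0 := by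
      intro S hS
      rw [Finset.mem_powerset] at hS
      rw [if_neg (fun h => hTb (h.trans hS))]
    rw [Finset.sum_congr rfl h0]
    have : ¬ (T.1 = b.1) := fun h => hTb (le_of_eq h)
    simp [this]

lemma Sm_row (b c : {s : Finset (Fin n) // s.card = Dp n k d}) :
    Sm n k d (iota n k d b) c = if b = c then 1 else 0 := by
  rw [Sm, Matrix.mul_apply]
  rw [Finset.sum_eq_single (⟨b.1, le_of_eq b.2⟩ : {s : Finset (Fin n) // s.card ≤ Dp n k d})]
  · rw [S1_row]
    simp only [if_pos rfl, one_mul, S2, Matrix.of_apply]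
    have hval : ((k - b.1.card).choose (Dp n k d - b.1.card) : ℝ)⁻¹ = 1 := by
      rw [b.2]
      simp
    by_cases h : b.1 ⊆ c.1
    · have : b = c := Subtype.ext (Finset.eq_of_subset_of_card_le h (by rw [b.2, c.2]))
      rw [if_pos h, hval, if_pos this]
      simp
    · have : ¬ b = c := fun he => h (le_of_eq (congrArg Subtype.val he))
      rw [if_neg h, if_neg this]
      simp
  · intro T _ hT
    rw [S1_row]
    have : ¬ (T.1 = b.1) := fun he => hT (Subtype.ext he)
    rw [if_neg this, zero_mul]
  · intro h
    exact absurd (Finset.mem_univ _) h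

lemma key_id (a s nk D : ℕ) (hs : s ≤ D) (hD : D ≤ nk) :
    (a + s).choose nk = ∑ i ∈ Finset.range (D+1), s.choose i * a.choose (nk - i) := by
  rw [add_comm a s, Nat.add_choose_eq, Finset.Nat.sum_antidiagonal_eq_sum_range_succ_mk]
  symm
  apply Finset.sum_subset
  · exact Finset.range_subset_range.2 (by omega)
  · intro i _ hi
    rw [Finset.mem_range, not_lt] at hi
    rw [Nat.choose_eq_zero_of_lt (by omega), zero_mul]

lemma key_id' (D s : ℕ) (hs : s ≤ D) (hD : D ≤ n - k) (h2D : 2*D ≤ k) (hk : k ≤ n) :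
    (n - (2*D - s)).choose (k - (2*D - s))
      = ∑ i ∈ Finset.range (D+1), s.choose i * (n - 2*D).choose (n - k - i) := by
  have h1 : n - (2*D - s) = (n - 2*D) + s := by omega
  have h2 : ((n - 2*D) + s) - (k - (2*D - s)) = n - k := by omega
  have hle : k - (2*D - s) ≤ (n - 2*D) + s := by omega
  rw [h1, ← Nat.choose_symm hle, h2]
  exact key_id (n - 2*D) s (n - k) D hs (by omega)

def Qm (n k d : ℕ) :
    Matrix {s : Finset (Fin n) // s.card = Dp n k d} {s : Finset (Fin n) // s.card = Dp n k d} ℝ :=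
  ∑ i ∈ Finset.range (Dp n k d),
    (((n - 2*Dp n k d).choose (n - k - i) : ℕ) : ℝ) • ((Wi n k d i)ᵀ * Wi n k d i)

lemma B_eq (hd : 2*d ≤ k) (hk : k ≤ n) :
    Bm n k d = (((n - 2*Dp n k d).choose (n - k - Dp n k d) : ℕ) : ℝ) • 1 + Qm n k d := by
  have hDd : Dp n k d ≤ d := min_le_left _ _
  have hDnk : Dp n k d ≤ n - k := min_le_right _ _
  ext a b
  have hsD : (a.1 ∩ b.1).card ≤ Dp n k d := by
    calc (a.1 ∩ b.1).card ≤ a.1.card := Finset.card_le_card Finset.inter_subset_left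
    _ = Dp n k d := a.2
  have hus : (a.1 ∪ b.1).card = 2*Dp n k d - (a.1 ∩ b.1).card := by
    have h := Finset.card_union_add_card_inter a.1 b.1
    rw [a.2, b.2] at h
    omega
  -- LHS entry
  have hL : Bm n k d a b
      = ((n - (2*Dp n k d - (a.1 ∩ b.1).card)).choose
          (k - (2*Dp n k d - (a.1 ∩ b.1).card)) : ℝ) := by
    rw [Bm, Matrix.mul_apply]
    have step : ∀ t : {s : Finset (Fin n) // s.card = k},
        (Um n k d)ᵀ a t * Um n k d t b
        = if a.1 ∪ b.1 ⊆ t.1 ∧ t.1 ⊆ Finset.univ then (1:ℝ) else 0 := by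
      intro t
      simp only [Um, Matrix.transpose_apply, Matrix.of_apply]
      by_cases h1 : a.1 ⊆ t.1 <;> by_cases h2 : b.1 ⊆ t.1 <;>
        simp [h1, h2, Finset.union_subset_iff, Finset.subset_univ]
    rw [Finset.sum_congr rfl (fun t _ => step t)]
    rw [sum_ind k (a.1 ∪ b.1) Finset.univ (Finset.subset_univ _)
      (by
        have h := Finset.card_union_le a.1 b.1
        rw [a.2, b.2] at h
        omega)]
    rw [Finset.card_univ, Fintype.card_fin, hus]
  -- Q entries
  have hQ : ∀ i, ((Wi n k d i)ᵀ * Wi n k d i) a b = ((a.1 ∩ b.1).card.choose i : ℝ) := by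
    intro i
    rw [Matrix.mul_apply]
    have step : ∀ γ : {s : Finset (Fin n) // s.card = i},
        (Wi n k d i)ᵀ a γ * Wi n k d i γ b
        = if (∅ : Finset (Fin n)) ⊆ γ.1 ∧ γ.1 ⊆ a.1 ∩ b.1 then (1:ℝ) else 0 := by
      intro γ
      simp only [Wi, Matrix.transpose_apply, Matrix.of_apply]
      by_cases h1 : γ.1 ⊆ a.1 <;> by_cases h2 : γ.1 ⊆ b.1 <;>
        simp [h1, h2, Finset.subset_inter_iff]
    rw [Finset.sum_congr rfl (fun γ _ => step γ)]
    rw [sum_ind i (∅ : Finset (Fin n)) (a.1 ∩ b.1) (Finset.empty_subset _) (Nat.zero_le _)]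
    simp
  -- diagonal entry
  have hdelta : ((1 : Matrix {s : Finset (Fin n) // s.card = Dp n k d}
      {s : Finset (Fin n) // s.card = Dp n k d} ℝ)) a b
      = ((a.1 ∩ b.1).card.choose (Dp n k d) : ℝ) := by
    by_cases hab : a = b
    · subst hab
      have h1 : (a.1 ∩ a.1).card = Dp n k d := by rw [Finset.inter_self, a.2]
      rw [h1]
      simp [Matrix.one_apply]
    · have hslt : (a.1 ∩ b.1).card < Dp n k d := by
        rcases lt_or_eq_of_le hsD with h | h
        · exact h
        · exfalso
          apply hab
          have h1 : a.1 ∩ b.1 = a.1 := Finset.eq_of_subset_of_card_le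
            Finset.inter_subset_left (by rw [a.2, h])
          have h2 : a.1 ⊆ b.1 := by rw [← h1]; exact Finset.inter_subset_right
          exact Subtype.ext (Finset.eq_of_subset_of_card_le h2 (by rw [a.2, b.2]))
      rw [Matrix.one_apply_ne hab, Nat.choose_eq_zero_of_lt hslt]
      simp
  rw [Matrix.add_apply, Matrix.smul_apply, hL, hdelta, Qm, Matrix.sum_apply]
  have hQs : ∀ i ∈ Finset.range (Dp n k d),
      ((((n - 2*Dp n k d).choose (n - k - i) : ℕ) : ℝ) • ((Wi n k d i)ᵀ * Wi n k d i)) a b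
      = ((a.1 ∩ b.1).card.choose i : ℝ) * ((n - 2*Dp n k d).choose (n - k - i) : ℝ) := by
    intro i _
    rw [Matrix.smul_apply, hQ i, smul_eq_mul]
    ring
  rw [Finset.sum_congr rfl hQs]
  rw [key_id' (n := n) (k := k) (Dp n k d) ((a.1 ∩ b.1).card) hsD hDnk (by omega) hk]
  push_cast
  rw [Finset.sum_range_succ]
  rw [smul_eq_mul]
  ring
lemma dot_self_nonneg {ι : Type*} [Fintype ι] (v : ι → ℝ) : 0 ≤ v ⬝ᵥ v :=
  Finset.sum_nonneg fun i _ => mul_self_nonneg (v i)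

lemma dot_gram {ι κ : Type*} [Fintype ι] [Fintype κ] (W : Matrix ι κ ℝ) (z : κ → ℝ) :
    z ⬝ᵥ ((Wᵀ * W) *ᵥ z) = (W *ᵥ z) ⬝ᵥ (W *ᵥ z) := by
  rw [← Matrix.mulVec_mulVec, dotProduct_mulVec, Matrix.vecMul_transpose]

lemma sum_mulVec' {ι κ β : Type*} [Fintype κ] (s : Finset β) (f : β → Matrix ι κ ℝ)
    (z : κ → ℝ) : (∑ b ∈ s, f b) *ᵥ z = ∑ b ∈ s, (f b *ᵥ z) := by
  ext j
  simp only [Matrix.mulVec, dotProduct, Matrix.sum_apply, Finset.sum_apply,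
    Finset.sum_mul]
  rw [Finset.sum_comm]

lemma dot_sum' {κ β : Type*} [Fintype κ] (s : Finset β) (f : β → (κ → ℝ)) (z : κ → ℝ) :
    z ⬝ᵥ (∑ b ∈ s, f b) = ∑ b ∈ s, z ⬝ᵥ f b := by
  simp only [dotProduct, Finset.sum_apply, Finset.mul_sum]
  rw [Finset.sum_comm]

lemma Qm_psd (z : {s : Finset (Fin n) // s.card = Dp n k d} → ℝ) :
    0 ≤ z ⬝ᵥ (Qm n k d *ᵥ z) := by
  rw [Qm, sum_mulVec', dot_sum']
  apply Finset.sum_nonneg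
  intro i _
  rw [Matrix.smul_mulVec, dotProduct_smul, smul_eq_mul, dot_gram]
  exact mul_nonneg (by positivity) (dot_self_nonneg _)

lemma row_norm (z : {s : Finset (Fin n) // s.card = Dp n k d} → ℝ) :
    z ⬝ᵥ z ≤ (Sm n k d *ᵥ z) ⬝ᵥ (Sm n k d *ᵥ z) := by
  have hval : ∀ b, (Sm n k d *ᵥ z) (iota n k d b) = z b := by
    intro b
    rw [Matrix.mulVec, dotProduct]
    rw [Finset.sum_congr rfl (fun c _ => by rw [Sm_row b c])]
    simp
  have hinj : ∀ a ∈ (Finset.univ : Finset {s : Finset (Fin n) // s.card = Dp n k d}),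
      ∀ b ∈ Finset.univ, iota n k d a = iota n k d b → a = b := by
    intro a _ b _ hab
    simp only [iota, Subtype.mk.injEq] at hab
    exact Subtype.ext hab
  calc z ⬝ᵥ z = ∑ b : {s : Finset (Fin n) // s.card = Dp n k d},
        (Sm n k d *ᵥ z) (iota n k d b) * (Sm n k d *ᵥ z) (iota n k d b) := by
        rw [dotProduct]
        exact Finset.sum_congr rfl fun b _ => by rw [hval b]
    _ = ∑ i ∈ Finset.univ.image (iota n k d),
        (Sm n k d *ᵥ z) i * (Sm n k d *ᵥ z) i := by
        rw [Finset.sum_image hinj]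
    _ ≤ ∑ i : {s : Finset (Fin n) // s.card ≤ d},
        (Sm n k d *ᵥ z) i * (Sm n k d *ᵥ z) i := by
        apply Finset.sum_le_sum_of_subset_of_nonneg (Finset.subset_univ _)
        intro i _ _
        exact mul_self_nonneg _
    _ = (Sm n k d *ᵥ z) ⬝ᵥ (Sm n k d *ᵥ z) := rfl

lemma eig_lower {I J : Type*} [Fintype I] [Fintype J]
    (S : Matrix I J ℝ) (B Q : Matrix J J ℝ) (c : ℝ) (hc : 0 < c)
    (hB : ∀ z : J → ℝ, B *ᵥ z = c • z + Q *ᵥ z) (hQ : ∀ z : J → ℝ, 0 ≤ z ⬝ᵥ (Q *ᵥ z))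
    (hrow : ∀ z : J → ℝ, z ⬝ᵥ z ≤ (S *ᵥ z) ⬝ᵥ (S *ᵥ z))
    (v : I → ℝ) (hv : v ≠ 0) (μ : ℝ) (hμ : μ ≠ 0)
    (heig : (S * B * Sᵀ) *ᵥ v = μ • v) : c ≤ μ := by
  have h1 : S *ᵥ (B *ᵥ (Sᵀ *ᵥ v)) = μ • v := by
    rw [Matrix.mulVec_mulVec, Matrix.mulVec_mulVec]
    exact heig
  have h2 : Sᵀ *ᵥ v ≠ 0 := by
    intro h0
    rw [h0, Matrix.mulVec_zero, Matrix.mulVec_zero] at h1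
    rcases smul_eq_zero.mp h1.symm with h | h
    · exact hμ h
    · exact hv h
  have h3 : (B *ᵥ (Sᵀ *ᵥ v)) ⬝ᵥ (μ • (Sᵀ *ᵥ v))
      = (S *ᵥ (B *ᵥ (Sᵀ *ᵥ v))) ⬝ᵥ (S *ᵥ (B *ᵥ (Sᵀ *ᵥ v))) := by
    have e : μ • (Sᵀ *ᵥ v) = Sᵀ *ᵥ (μ • v) := by rw [Matrix.mulVec_smul]
    rw [e, ← h1, dotProduct_mulVec, Matrix.vecMul_transpose]
  have h4 := hrow (B *ᵥ (Sᵀ *ᵥ v))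
  have hgw : B *ᵥ (Sᵀ *ᵥ v) = c • (Sᵀ *ᵥ v) + Q *ᵥ (Sᵀ *ᵥ v) := hB (Sᵀ *ᵥ v)
  have hq := hQ (Sᵀ *ᵥ v)
  have hqq : (0:ℝ) ≤ (Q *ᵥ (Sᵀ *ᵥ v)) ⬝ᵥ (Q *ᵥ (Sᵀ *ᵥ v)) := dot_self_nonneg _
  have hww : 0 < (Sᵀ *ᵥ v) ⬝ᵥ (Sᵀ *ᵥ v) := by
    rcases Function.ne_iff.mp h2 with ⟨j, hj⟩
    apply Finset.sum_pos' (fun i _ => mul_self_nonneg _)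
    exact ⟨j, Finset.mem_univ _, mul_self_pos.mpr hj⟩
  set w := Sᵀ *ᵥ v
  set u := Q *ᵥ w
  have e1 : (B *ᵥ w) ⬝ᵥ (B *ᵥ w)
      = c*c*(w ⬝ᵥ w) + 2*c*(w ⬝ᵥ u) + u ⬝ᵥ u := by
    rw [hgw]
    simp only [add_dotProduct, dotProduct_add, smul_dotProduct,
      dotProduct_smul, smul_eq_mul]
    rw [dotProduct_comm u w]
    ring
  have e2 : w ⬝ᵥ (B *ᵥ w) = c*(w ⬝ᵥ w) + w ⬝ᵥ u := by
    rw [hgw, dotProduct_add, dotProduct_smul]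
    simp only [smul_eq_mul]
  have e3 : (B *ᵥ w) ⬝ᵥ (μ • w) = μ * (w ⬝ᵥ (B *ᵥ w)) := by
    rw [dotProduct_smul, dotProduct_comm (B *ᵥ w) w]
    simp only [smul_eq_mul]
  -- combine
  rw [e3] at h3
  nlinarith [h3, h4, e1, e2, hq, hqq, hww, mul_pos hc hww]

lemma choose_le_mul_l {m r : ℕ} (hr : r ≤ m) : (m+1).choose r ≤ (m+1) * m.choose r := by
  cases r with
  | zero => simp
  | succ r' =>
    have h1 : (m+1).choose (r'+1) = m.choose (r'+1) + m.choose r' := by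
      rw [Nat.choose_succ_succ']
      omega
    have h2 : m.choose r' ≤ m * m.choose (r'+1) := by
      have h3 : m.choose (r'+1) * (r'+1) = m.choose r' * (m - r') := Nat.choose_succ_right_eq m r'
      have h4 : 1 ≤ m - r' := by omega
      calc m.choose r' ≤ m.choose r' * (m - r') := Nat.le_mul_of_pos_right _ (by omega)
        _ = m.choose (r'+1) * (r'+1) := h3.symm
        _ ≤ m.choose (r'+1) * m := Nat.mul_le_mul_left _ (by omega)
        _ = m * m.choose (r'+1) := Nat.mul_comm _ _
    calc (m+1).choose (r'+1) = m.choose (r'+1) + m.choose r' := h1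
      _ ≤ m.choose (r'+1) + m * m.choose (r'+1) := Nat.add_le_add_left h2 _
      _ = (m+1) * m.choose (r'+1) := by ring
    
lemma choose_step {n k : ℕ} (h1 : 1 ≤ k) (h2 : k < n) :
    n.choose k ≤ n^2 * (n-2).choose (k-1) := by
  obtain ⟨n', rfl⟩ : ∃ n', n = n'+1 := ⟨n-1, by omega⟩
  obtain ⟨k', rfl⟩ : ∃ k', k = k'+1 := ⟨k-1, by omega⟩
  obtain ⟨m, rfl⟩ : ∃ m, n' = m+1 := ⟨n'-1, by omega⟩
  have a1 : (m+2).choose (k'+1) * (k'+1) = (m+2) * (m+1).choose k' := by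
    have h := Nat.add_one_mul_choose_eq (m+1) k'
    simp only [Nat.succ_eq_add_one, show m+1+1 = m+2 from rfl] at h
    omega
  have a2 : (m+2).choose (k'+1) ≤ (m+2) * (m+1).choose k' := by
    calc (m+2).choose (k'+1) ≤ (m+2).choose (k'+1) * (k'+1) := Nat.le_mul_of_pos_right _ (by omega)
      _ = (m+2) * (m+1).choose k' := a1
  have a3 : (m+1).choose k' ≤ (m+1) * m.choose k' := choose_le_mul_l (by omega)
  calc (m+2).choose (k'+1) ≤ (m+2) * ((m+1) * m.choose k') :=
        le_trans a2 (Nat.mul_le_mul_left _ a3)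
    _ ≤ (m+2)^2 * m.choose k' := by nlinarith [Nat.zero_le (m.choose k')]
    _ = (m+1+1)^2 * ((m+1+1)-2).choose ((k'+1)-1) := by
        have e : m+1+1-2 = m := by omega
        have e2 : k'+1-1 = k' := by omega
        rw [e, e2]
    
lemma choose_le_pow_mul (j : ℕ) : ∀ n k : ℕ, j ≤ k → k + j ≤ n →
    n.choose k ≤ n^(2*j) * (n-2*j).choose (k-j) := by
  induction j with
  | zero => intro n k _ _; simp
  | succ j ih =>
    intro n k h1 h2
    have s1 : n.choose k ≤ n^2 * (n-2).choose (k-1) := choose_step (by omega) (by omega)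
    have s2 : (n-2).choose (k-1) ≤ (n-2)^(2*j) * ((n-2)-2*j).choose ((k-1)-j) :=
      ih (n-2) (k-1) (by omega) (by omega)
    have s3 : (n-2)^(2*j) ≤ n^(2*j) := Nat.pow_le_pow_left (by omega) _
    have e1 : (n-2)-2*j = n - 2*(j+1) := by omega
    have e2 : (k-1)-j = k - (j+1) := by omega
    calc n.choose k ≤ n^2 * ((n-2)^(2*j) * ((n-2)-2*j).choose ((k-1)-j)) :=
        le_trans s1 (Nat.mul_le_mul_left _ s2)
      _ ≤ n^2 * (n^(2*j) * ((n-2)-2*j).choose ((k-1)-j)) :=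
        Nat.mul_le_mul_left _ (Nat.mul_le_mul_right _ s3)
      _ = n^(2*(j+1)) * (n - 2*(j+1)).choose (k - (j+1)) := by
        rw [e1, e2, ← Nat.mul_assoc, ← Nat.pow_add]
        ring_nf

end SM

end Aux

open Finset Matrix in
/-- Every nonzero eigenvalue of the moment matrix of the uniform distribution on
`k`-sparse Boolean vectors (with `2d ≤ k ≤ n`) is at least `n^{−Cd}` for an absolute
constant `C`: the distribution is `n^{−O(d)}`-spectrally rich up to degree `2d`. -/
theorem stmt16 :
    ∃ C : ℝ, 0 < C ∧
      ∀ n k d : ℕ, 1 ≤ n → 2 * d ≤ k → k ≤ n →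
        ∀ (h : (sparseMoment n k d).IsHermitian) (i : {s : Finset (Fin n) // s.card ≤ d}),
          h.eigenvalues i ≠ 0 → (n : ℝ) ^ (-(C * (d : ℝ))) ≤ h.eigenvalues i := by
  refine ⟨2, by norm_num, ?_⟩
  intro n k d hn hd hk h i hne
  have hDd : SM.Dp n k d ≤ d := min_le_left _ _
  have hDnk : SM.Dp n k d ≤ n - k := min_le_right _ _
  have h2D : 2 * SM.Dp n k d ≤ k := by omega
  have hcpos : 0 < (n - 2*SM.Dp n k d).choose (n - k - SM.Dp n k d) :=
    Nat.choose_pos (by omega)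
  have hNpos : 0 < n.choose k := Nat.choose_pos hk
  have hfact : sparseMoment n k d
      = ((n.choose k : ℝ))⁻¹ • (SM.Sm n k d * SM.Bm n k d * (SM.Sm n k d)ᵀ) := by
    rw [SM.sparseMoment_eq n k d, SM.V_eq hk, SM.W_eq hd]
    congr 1
    rw [SM.Bm, SM.Sm]
    simp only [Matrix.transpose_mul, Matrix.transpose_transpose, Matrix.mul_assoc]
  obtain ⟨v, hv0, hvne⟩ :
      ∃ v : {s : Finset (Fin n) // s.card ≤ d} → ℝ,
        sparseMoment n k d *ᵥ v = h.eigenvalues i • v ∧ v ≠ 0 :=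
    ⟨⇑(h.eigenvectorBasis i), h.mulVec_eigenvectorBasis i,
      fun h0 => (h.eigenvectorBasis.orthonormal.ne_zero i) ((WithLp.ofLp_eq_zero 2).mp h0)⟩
  obtain ⟨μ, hμ⟩ : ∃ μ : ℝ, h.eigenvalues i = μ := ⟨_, rfl⟩
  rw [hμ] at hv0 hne ⊢
  have hNne : ((n.choose k : ℕ) : ℝ) ≠ 0 := Nat.cast_ne_zero.mpr hNpos.ne'
  have heig : (SM.Sm n k d * SM.Bm n k d * (SM.Sm n k d)ᵀ) *ᵥ v
      = (((n.choose k : ℕ) : ℝ) * μ) • v := by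
    rw [hfact, Matrix.smul_mulVec] at hv0
    have h2 := congrArg (fun x => ((n.choose k : ℕ) : ℝ) • x) hv0
    rw [smul_smul, mul_inv_cancel₀ hNne, one_smul] at h2
    rw [h2, smul_smul]
  have hmu_ne : ((n.choose k : ℕ) : ℝ) * μ ≠ 0 := mul_ne_zero hNne hne
  have hkey := SM.eig_lower (SM.Sm n k d) (SM.Bm n k d) (SM.Qm n k d)
      (((n - 2*SM.Dp n k d).choose (n - k - SM.Dp n k d) : ℕ) : ℝ)
      (by exact_mod_cast hcpos)
      (fun z => by
        rw [SM.B_eq hd hk, Matrix.add_mulVec, Matrix.smul_mulVec, Matrix.one_mulVec])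
      (fun z => SM.Qm_psd z) (fun z => SM.row_norm z)
      v hvne _ hmu_ne heig
  have hch : n.choose k ≤ n^(2*d) * (n - 2*SM.Dp n k d).choose (n - k - SM.Dp n k d) := by
    have h1 := SM.choose_le_pow_mul (SM.Dp n k d) n k (by omega) (by omega)
    have h2 : (n - 2*SM.Dp n k d).choose (k - SM.Dp n k d)
        = (n - 2*SM.Dp n k d).choose (n - k - SM.Dp n k d) := by
      have hle : k - SM.Dp n k d ≤ n - 2*SM.Dp n k d := by omega
      rw [← Nat.choose_symm hle]
      congr 1
      omega
    have h3 : n^(2*SM.Dp n k d) ≤ n^(2*d) := Nat.pow_le_pow_right (by omega) (by omega)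
    calc n.choose k
        ≤ n^(2*SM.Dp n k d) * (n - 2*SM.Dp n k d).choose (k - SM.Dp n k d) := h1
      _ = n^(2*SM.Dp n k d) * (n - 2*SM.Dp n k d).choose (n - k - SM.Dp n k d) := by rw [h2]
      _ ≤ n^(2*d) * (n - 2*SM.Dp n k d).choose (n - k - SM.Dp n k d) :=
          Nat.mul_le_mul_right _ h3
  have hPpos : (0:ℝ) < (n:ℝ)^(2*d) := by positivity
  have hcR : (0:ℝ) < (((n - 2*SM.Dp n k d).choose (n - k - SM.Dp n k d) : ℕ) : ℝ) := by
    exact_mod_cast hcpos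
  have hNR : (0:ℝ) < ((n.choose k : ℕ) : ℝ) := by exact_mod_cast hNpos
  have hchR : ((n.choose k : ℕ) : ℝ)
      ≤ (n:ℝ)^(2*d) * (((n - 2*SM.Dp n k d).choose (n - k - SM.Dp n k d) : ℕ) : ℝ) := by
    exact_mod_cast hch
  have hmupos : 0 < μ := by
    by_contra h'
    push_neg at h'
    have hle : ((n.choose k : ℕ) : ℝ) * μ ≤ 0 :=
      mul_nonpos_of_nonneg_of_nonpos hNR.le h'
    linarith
  have hfin : ((n:ℝ)^(2*d))⁻¹ ≤ μ := by
    have h1le : 1 ≤ (n:ℝ)^(2*d) * μ := by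
      nlinarith [mul_le_mul_of_nonneg_right hchR hmupos.le]
    calc ((n:ℝ)^(2*d))⁻¹ = ((n:ℝ)^(2*d))⁻¹ * 1 := (mul_one _).symm
      _ ≤ ((n:ℝ)^(2*d))⁻¹ * ((n:ℝ)^(2*d) * μ) :=
          mul_le_mul_of_nonneg_left h1le (by positivity)
      _ = μ := by field_simp
  have hrw : (n:ℝ) ^ (-(2 * (d:ℝ))) = ((n:ℝ)^(2*d))⁻¹ := by
    rw [show -(2*(d:ℝ)) = -(((2*d : ℕ) : ℝ)) by push_cast; ring]
    rw [Real.rpow_neg (by positivity), Real.rpow_natCast]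
  rw [hrw]
  exact hfin
end
end
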